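/- arXiv:2011.13639 — 4 statements merged into one kernel-verified Lean document; each statement's English description precedes it below -/
import Mathlib

section
/- Let E, F ⊂ K be pseudo-convergent sequences of algebraic type, both with breadth δ, and let u be an extension of v to the algebraic closure K̄. If β is a pseudo-limit of E with respect to u and β' is a pseudo-limit of F with respect to u, then d_δ(V_E,V_F) = max{e^{−u(β−β')} − e^{−δ}, 0}. -/
open Filter Topology TopologicalSpace Set Polynomial

noncomputable section

namespace PaperPCZar

variable {K : Type*} [Field K]

/-- `expNeg γ = e^{-γ}` for `γ ∈ ℝ ∪ {∞}`, with `e^{-∞} = 0`. -/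
def expNeg (γ : WithTop ℝ) : ℝ := WithTop.recTopCoe 0 (fun r => Real.exp (-r)) γ

/-- `v` is a rank-one (i.e. nontrivial, real-valued) valuation. -/
def IsRankOne (v : AddValuation K (WithTop ℝ)) : Prop := ∃ x : K, v x ≠ 0 ∧ v x ≠ ⊤

/-- The value group `Γ_v` of `v`, as a subset of `ℝ`. -/
def valueGroup (v : AddValuation K (WithTop ℝ)) : Set ℝ := {r : ℝ | ∃ x : K, v x = (r : WithTop ℝ)}

/-- `ℚΓ_v = {q·γ : q ∈ ℚ, γ ∈ Γ_v}`, the divisible hull of the value group inside `ℝ`. -/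
def QGamma (v : AddValuation K (WithTop ℝ)) : Set ℝ :=
  {r : ℝ | ∃ (q : ℚ) (γ : ℝ), γ ∈ valueGroup v ∧ r = q * γ}

/-- Order convergence of a sequence in `ℝ ∪ {∞}` to `γ`. -/
def OrdLim (f : ℕ → WithTop ℝ) (γ : WithTop ℝ) : Prop :=
  (∀ a : WithTop ℝ, a < γ → ∀ᶠ n in atTop, a < f n) ∧
  (∀ b : WithTop ℝ, γ < b → ∀ᶠ n in atTop, f n < b)

/-- `s` is a pseudo-convergent sequence with respect to `v`. -/
def IsPC (v : AddValuation K (WithTop ℝ)) (s : ℕ → K) : Prop :=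
  ∀ n, v (s (n + 1) - s n) < v (s (n + 2) - s (n + 1))

/-- `s` is a pseudo-divergent sequence with respect to `v`. -/
def IsPD (v : AddValuation K (WithTop ℝ)) (s : ℕ → K) : Prop :=
  ∀ n, v (s (n + 1) - s (n + 2)) < v (s n - s (n + 1))

/-- `s` is a pseudo-stationary sequence with respect to `v`. -/
def IsPS (v : AddValuation K (WithTop ℝ)) (s : ℕ → K) : Prop :=
  ∀ n m n' m' : ℕ, n ≠ m → n' ≠ m' → v (s n - s m) = v (s n' - s m')

/-- `δ ∈ ℝ ∪ {∞}` is the breadth of the sequence `s`, i.e. `δ = lim_n v(s_{n+1} - s_n)`. -/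
def IsBreadth (v : AddValuation K (WithTop ℝ)) (s : ℕ → K) (δ : WithTop ℝ) : Prop :=
  OrdLim (fun n => v (s (n + 1) - s n)) δ

/-- `α ∈ K` is a pseudo-limit of the pseudo-convergent sequence `s`. -/
def IsPCLimit (v : AddValuation K (WithTop ℝ)) (s : ℕ → K) (α : K) : Prop :=
  ∀ n, v (α - s n) < v (α - s (n + 1))

/-- `α ∈ K` is a pseudo-limit of the pseudo-divergent sequence `s`. -/
def IsPDLimit (v : AddValuation K (WithTop ℝ)) (s : ℕ → K) (α : K) : Prop :=
  ∀ n, v (α - s (n + 1)) < v (α - s n)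

/-- `β ∈ K̄` is a pseudo-limit of `s ⊆ K` with respect to an extension `u` of `v`
to the algebraic closure of `K`. -/
def IsPCLimitAC (u : AddValuation (AlgebraicClosure K) (WithTop ℝ)) (s : ℕ → K)
    (β : AlgebraicClosure K) : Prop :=
  ∀ n, u (β - algebraMap K (AlgebraicClosure K) (s n)) <
    u (β - algebraMap K (AlgebraicClosure K) (s (n + 1)))

/-- `s` is of transcendental type: for every polynomial `f`, `v(f(s_n))` eventually
stabilizes. -/
def IsTranscendentalType (v : AddValuation K (WithTop ℝ)) (s : ℕ → K) : Prop :=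
  ∀ f : Polynomial K, ∃ N, ∀ n ≥ N, v (f.eval (s n)) = v (f.eval (s N))

/-- The ultrametric distance `d(x,y) = e^{-v(x-y)}` on `K`. -/
def dK (v : AddValuation K (WithTop ℝ)) (x y : K) : ℝ := expNeg (v (x - y))

/-- The set `V_E = {φ ∈ K(X) : φ(s_n) ∈ V for all but finitely many n}`. -/
def VESet (v : AddValuation K (WithTop ℝ)) (s : ℕ → K) : Set (RatFunc K) :=
  {φ : RatFunc K | ∀ᶠ n in atTop, 0 ≤ v (RatFunc.eval (RingHom.id K) (s n) φ)}

/-- `Zar(K(X)|V)`: the valuation subrings of `K(X)` containing (the image of) `V`. -/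
def ZarSet (v : AddValuation K (WithTop ℝ)) : Set (ValuationSubring (RatFunc K)) :=
  {W | ∀ x : K, 0 ≤ v x → algebraMap K (RatFunc K) x ∈ W}

/-- `𝒱`: valuation subrings of `K(X)` of the form `V_E`, `E` pseudo-convergent. -/
def VV (v : AddValuation K (WithTop ℝ)) : Set (ValuationSubring (RatFunc K)) :=
  {W | ∃ s : ℕ → K, IsPC v s ∧ (W : Set (RatFunc K)) = VESet v s}

/-- `𝒱(•,δ)`: those `V_E` with `E` pseudo-convergent of breadth `δ`. -/
def VVδ (v : AddValuation K (WithTop ℝ)) (δ : WithTop ℝ) : Set (ValuationSubring (RatFunc K)) :=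
  {W | ∃ s : ℕ → K, IsPC v s ∧ IsBreadth v s δ ∧ (W : Set (RatFunc K)) = VESet v s}

/-- `𝒱_K(•,δ)`: those `V_E` with `E` pseudo-convergent of breadth `δ` having a
pseudo-limit in `K`. -/
def VVKδ (v : AddValuation K (WithTop ℝ)) (δ : WithTop ℝ) : Set (ValuationSubring (RatFunc K)) :=
  {W | ∃ s : ℕ → K, IsPC v s ∧ IsBreadth v s δ ∧ (∃ α : K, IsPCLimit v s α) ∧
    (W : Set (RatFunc K)) = VESet v s}

/-- `𝒱(β,•)`: those `V_E` with `E` pseudo-convergent having `β ∈ K̄` as a pseudo-limit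
with respect to `u`. -/
def VVβ (v : AddValuation K (WithTop ℝ)) (u : AddValuation (AlgebraicClosure K) (WithTop ℝ))
    (β : AlgebraicClosure K) : Set (ValuationSubring (RatFunc K)) :=
  {W | ∃ s : ℕ → K, IsPC v s ∧ IsPCLimitAC u s β ∧ (W : Set (RatFunc K)) = VESet v s}

/-- `𝒱(β,•)` for a pseudo-limit `β ∈ K`. -/
def VVβK (v : AddValuation K (WithTop ℝ)) (β : K) : Set (ValuationSubring (RatFunc K)) :=
  {W | ∃ s : ℕ → K, IsPC v s ∧ IsPCLimit v s β ∧ (W : Set (RatFunc K)) = VESet v s}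

/-- `𝒱_div`: those `V_E` with `E` pseudo-divergent. -/
def VVdiv (v : AddValuation K (WithTop ℝ)) : Set (ValuationSubring (RatFunc K)) :=
  {W | ∃ s : ℕ → K, IsPD v s ∧ (W : Set (RatFunc K)) = VESet v s}

/-- `𝒱_div(•,δ)`: those `V_E` with `E` pseudo-divergent of breadth `δ`. -/
def VVdivδ (v : AddValuation K (WithTop ℝ)) (δ : WithTop ℝ) : Set (ValuationSubring (RatFunc K)) :=
  {W | ∃ s : ℕ → K, IsPD v s ∧ IsBreadth v s δ ∧ (W : Set (RatFunc K)) = VESet v s}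

/-- `𝒱_div(β,•)`: those `V_E` with `E` pseudo-divergent having `β ∈ K` as a pseudo-limit. -/
def VVdivβ (v : AddValuation K (WithTop ℝ)) (β : K) : Set (ValuationSubring (RatFunc K)) :=
  {W | ∃ s : ℕ → K, IsPD v s ∧ IsPDLimit v s β ∧ (W : Set (RatFunc K)) = VESet v s}

/-- `𝒱_stat(•,δ)`: those `V_E` with `E` pseudo-stationary of breadth `δ`. -/
def VVstatδ (v : AddValuation K (WithTop ℝ)) (δ : WithTop ℝ) :
    Set (ValuationSubring (RatFunc K)) :=
  {W | ∃ s : ℕ → K, (∀ n m : ℕ, n ≠ m → v (s n - s m) = δ) ∧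
    (W : Set (RatFunc K)) = VESet v s}

/-- `𝒱_stat(β,•)`: those `V_E` with `E` pseudo-stationary having `β` as a pseudo-limit. -/
def VVstatβ (v : AddValuation K (WithTop ℝ)) (β : K) : Set (ValuationSubring (RatFunc K)) :=
  {W | ∃ (s : ℕ → K) (δ : WithTop ℝ), (∀ n m : ℕ, n ≠ m → v (s n - s m) = δ) ∧
    (∀ n, δ ≤ v (β - s n)) ∧ (W : Set (RatFunc K)) = VESet v s}

/-- The Zariski topology on the valuation subrings of a field `L`, generated by the
sets `B(φ) = {W : φ ∈ W}`. -/
def zarTop (L : Type*) [Field L] : TopologicalSpace (ValuationSubring L) :=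
  generateFrom {U | ∃ φ : L, U = {W : ValuationSubring L | φ ∈ W}}

/-- The constructible topology on the valuation subrings of a field `L`: the coarsest
topology in which all finite intersections `B(φ₁) ∩ ⋯ ∩ B(φ_k)` are open and closed. -/
def consTop (L : Type*) [Field L] : TopologicalSpace (ValuationSubring L) :=
  generateFrom {U | ∃ T : Finset L, U = {W : ValuationSubring L | ∀ φ ∈ T, φ ∈ W} ∨
    U = {W : ValuationSubring L | ∀ φ ∈ T, φ ∈ W}ᶜ}

/-- The subspace Zariski topology on a set of valuation subrings. -/
def zarSub {L : Type*} [Field L] (S : Set (ValuationSubring L)) : TopologicalSpace ↥S :=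
  (zarTop L).induced Subtype.val

/-- The subspace constructible topology on a set of valuation subrings. -/
def consSub {L : Type*} [Field L] (S : Set (ValuationSubring L)) : TopologicalSpace ↥S :=
  (consTop L).induced Subtype.val

/-- `d` is a metric on `X` inducing the topology `t`. -/
def MetrizedBy {X : Type*} (t : TopologicalSpace X) (d : X → X → ℝ) : Prop :=
  (∀ x y, d x y = d y x) ∧ (∀ x y, d x y = 0 ↔ x = y) ∧
  (∀ x y z, d x z ≤ d x y + d y z) ∧
  t = generateFrom {U : Set X | ∃ (x : X) (ε : ℝ), 0 < ε ∧ U = {y | d x y < ε}}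

/-- The topology `t` is metrizable. -/
def IsMetrizable {X : Type*} (t : TopologicalSpace X) : Prop := ∃ d, MetrizedBy t d

/-- The topology `t` is induced by an ultrametric. -/
def IsUltrametrizable {X : Type*} (t : TopologicalSpace X) : Prop :=
  ∃ d, MetrizedBy t d ∧ ∀ x y z, d x z ≤ max (d x y) (d y z)

/-- `dd` computes the distance `d_δ` on `𝒱(•,δ)`:
`d_δ(V_E, V_F) = lim_n max (d(s_n,t_n) - e^{-δ}) 0`. -/
def IsDistδ (v : AddValuation K (WithTop ℝ)) (δ : WithTop ℝ)
    (dd : ValuationSubring (RatFunc K) → ValuationSubring (RatFunc K) → ℝ) : Prop :=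
  ∀ (W W' : ValuationSubring (RatFunc K)) (s t : ℕ → K),
    IsPC v s → IsBreadth v s δ → (W : Set (RatFunc K)) = VESet v s →
    IsPC v t → IsBreadth v t δ → (W' : Set (RatFunc K)) = VESet v t →
    Tendsto (fun n => max (dK v (s n) (t n) - expNeg δ) 0) atTop (𝓝 (dd W W'))

/-- The `Λ`-upper limit topology on the interval `(-∞, b] ⊆ ℝ ∪ {∞}`, generated by the
half-open intervals `(α, λ]` with `λ ∈ Λ ∪ {∞}`. -/
def upperTopWT (b : WithTop ℝ) (Λ : Set ℝ) : TopologicalSpace {γ : WithTop ℝ // γ ≤ b} :=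
  generateFrom {U | ∃ α lam : WithTop ℝ, α ≤ b ∧
    (lam = ⊤ ∨ ∃ r ∈ Λ, lam = (r : WithTop ℝ)) ∧
    U = {γ : {γ : WithTop ℝ // γ ≤ b} | α < (γ : WithTop ℝ) ∧ (γ : WithTop ℝ) ≤ lam}}

/-- The `Λ`-upper limit topology on `(-∞, +∞] = ℝ ∪ {∞}`. -/
def upperTopAll (Λ : Set ℝ) : TopologicalSpace (WithTop ℝ) :=
  generateFrom {U | ∃ α lam : WithTop ℝ,
    (lam = ⊤ ∨ ∃ r ∈ Λ, lam = (r : WithTop ℝ)) ∧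
    U = {γ : WithTop ℝ | α < γ ∧ γ ≤ lam}}

/-- The `Λ`-upper limit topology on an interval `(a, b]` of `ℝ ∪ {±∞}`. -/
def upperTopE (a b : EReal) (Λ : Set ℝ) : TopologicalSpace {x : EReal // a < x ∧ x ≤ b} :=
  generateFrom {U | ∃ α lam : EReal, (a < α ∧ α ≤ b) ∧
    (lam = ⊤ ∨ ∃ r ∈ Λ, lam = (r : EReal)) ∧
    U = {x : {x : EReal // a < x ∧ x ≤ b} | α < (x : EReal) ∧ (x : EReal) ≤ lam}}


/-- `𝒲`: the valuation domains of the valuations `w_E : φ ↦ lim_n v(φ(s_n))`, as `E`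
ranges over the pseudo-convergent sequences for which `w_E` is a valuation. -/
def WW (v : AddValuation K (WithTop ℝ)) : Set (ValuationSubring (RatFunc K)) :=
  {W | ∃ (s : ℕ → K) (w : AddValuation (RatFunc K) (WithTop ℝ)), IsPC v s ∧
    (∀ φ : RatFunc K, OrdLim (fun n => v (RatFunc.eval (RingHom.id K) (s n) φ)) (w φ)) ∧
    (W : Set (RatFunc K)) = {φ : RatFunc K | 0 ≤ w φ}}

lemma expNeg_top' : expNeg ⊤ = 0 := rfl

lemma expNeg_nonneg (γ : WithTop ℝ) : 0 ≤ expNeg γ := by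
  cases γ with
  | top => simp [expNeg]
  | coe r => simpa [expNeg] using (Real.exp_pos (-r)).le

lemma expNeg_antitone : Antitone expNeg := by
  intro a b hab
  cases b with
  | top => cases a <;> simp [expNeg, expNeg_nonneg, (Real.exp_pos _).le]
  | coe rb =>
    cases a with
    | top => simp at hab
    | coe ra =>
      have : ra ≤ rb := by exact_mod_cast hab
      simpa [expNeg] using Real.exp_le_exp.2 (by linarith)

lemma tendsto_expNeg_of_ordLim {f : ℕ → WithTop ℝ} {δ : WithTop ℝ}
    (h : OrdLim f δ) : Tendsto (fun n => expNeg (f n)) atTop (𝓝 (expNeg δ)) := by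
  rw [Metric.tendsto_atTop]
  intro ε hε
  cases δ with
  | top =>
    obtain ⟨a, ha⟩ : ∃ a : ℝ, Real.exp (-a) < ε := ⟨-Real.log ε + 1, by
      have h1 : Real.exp (-(-Real.log ε + 1)) < Real.exp (Real.log ε) :=
        Real.exp_lt_exp.2 (by linarith)
      rwa [Real.exp_log hε] at h1⟩
    have := h.1 (a : WithTop ℝ) (WithTop.coe_lt_top a)
    rw [eventually_atTop] at this
    obtain ⟨N, hN⟩ := this
    refine ⟨N, fun n hn => ?_⟩
    have hfn := hN n hn
    rw [Real.dist_eq, expNeg_top', sub_zero, abs_of_nonneg (expNeg_nonneg _)]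
    cases hc : f n with
    | top => simpa [expNeg] using hε
    | coe r =>
      rw [hc] at hfn
      have : a < r := by exact_mod_cast hfn
      calc expNeg (r : WithTop ℝ) = Real.exp (-r) := rfl
        _ < Real.exp (-a) := Real.exp_lt_exp.2 (by linarith)
        _ < ε := ha
  | coe d =>
    have hcont : ContinuousAt (fun r : ℝ => Real.exp (-r)) d :=
      (Real.continuous_exp.comp continuous_neg).continuousAt
    rw [Metric.continuousAt_iff] at hcont
    obtain ⟨η, hη, hball⟩ := hcont ε hε
    have h1 := h.1 ((d - η : ℝ) : WithTop ℝ) (by exact_mod_cast sub_lt_self d hη)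
    have h2 := h.2 ((d + η : ℝ) : WithTop ℝ) (by exact_mod_cast lt_add_of_pos_right d hη)
    rw [eventually_atTop] at h1 h2
    obtain ⟨N1, hN1⟩ := h1
    obtain ⟨N2, hN2⟩ := h2
    refine ⟨max N1 N2, fun n hn => ?_⟩
    have ha := hN1 n (le_trans (le_max_left _ _) hn)
    have hb := hN2 n (le_trans (le_max_right _ _) hn)
    cases hc : f n with
    | top => rw [hc] at hb; exact absurd hb (by simp)
    | coe r =>
      rw [hc] at ha hb
      have h1' : d - η < r := by exact_mod_cast ha
      have h2' : r < d + η := by exact_mod_cast hb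
      have : dist r d < η := by rw [Real.dist_eq, abs_lt]; constructor <;> linarith
      simpa [expNeg, Real.dist_eq] using hball this

/-- For a pseudo-limit `β` of `s` w.r.t. `u`, `u(β - s_n) = v(s_{n+1} - s_n)`. -/
lemma pclimit_dist (v : AddValuation K (WithTop ℝ))
    (u : AddValuation (AlgebraicClosure K) (WithTop ℝ))
    (hu : ∀ x : K, u (algebraMap K (AlgebraicClosure K) x) = v x)
    (s : ℕ → K) (β : AlgebraicClosure K) (hβ : IsPCLimitAC u s β) (n : ℕ) :
    u (β - algebraMap K (AlgebraicClosure K) (s n)) = v (s (n + 1) - s n) := by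
  set S : ℕ → AlgebraicClosure K := fun n => algebraMap K (AlgebraicClosure K) (s n) with hS
  have h1 : u (S (n + 1) - S n) = v (s (n + 1) - s n) := by
    rw [hS]; simp only [← map_sub]; exact hu _
  have h2 : S (n + 1) - S n = (β - S n) - (β - S (n + 1)) := by ring
  rw [← h1, h2, AddValuation.map_sub_eq_of_lt_left u (hβ n)]

/-- If `E, F` are pseudo-convergent of algebraic type with breadth `δ`
and `β, β'` are pseudo-limits (in the algebraic closure, w.r.t. an extension `u` of `v`)
of `E` and `F` respectively, then `d_δ(V_E,V_F) = max (e^{-u(β-β')} - e^{-δ}) 0`. -/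
theorem statement4 (v : AddValuation K (WithTop ℝ)) (hv : IsRankOne v)
    (u : AddValuation (AlgebraicClosure K) (WithTop ℝ))
    (hu : ∀ x : K, u (algebraMap K (AlgebraicClosure K) x) = v x)
    (δ : WithTop ℝ)
    (dd : ValuationSubring (RatFunc K) → ValuationSubring (RatFunc K) → ℝ)
    (hdd : IsDistδ v δ dd)
    (s t : ℕ → K) (hs : IsPC v s) (hsalg : ¬ IsTranscendentalType v s)
    (hsδ : IsBreadth v s δ)
    (ht : IsPC v t) (htalg : ¬ IsTranscendentalType v t) (htδ : IsBreadth v t δ)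
    (W W' : ValuationSubring (RatFunc K))
    (hW : (W : Set (RatFunc K)) = VESet v s) (hW' : (W' : Set (RatFunc K)) = VESet v t)
    (β β' : AlgebraicClosure K) (hβ : IsPCLimitAC u s β) (hβ' : IsPCLimitAC u t β') :
    dd W W' = max (expNeg (u (β - β')) - expNeg δ) 0 := by
  classical
  set S : ℕ → AlgebraicClosure K := fun n => algebraMap K (AlgebraicClosure K) (s n) with hS
  set T : ℕ → AlgebraicClosure K := fun n => algebraMap K (AlgebraicClosure K) (t n) with hT
  set c : WithTop ℝ := u (β - β') with hc
  have key : Tendsto (fun n => max (dK v (s n) (t n) - expNeg δ) 0) atTop (𝓝 (dd W W')) :=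
    hdd W W' s t hs hsδ hW ht htδ hW'
  have ha : ∀ n, u (β - S n) = v (s (n + 1) - s n) := fun n =>
    pclimit_dist v u hu s β hβ n
  have hb : ∀ n, u (β' - T n) = v (t (n + 1) - t n) := fun n =>
    pclimit_dist v u hu t β' hβ' n
  have hst : ∀ n, (v (s n - t n) : WithTop ℝ) = u (S n - T n) := by
    intro n; rw [hS, hT]; simp only [← map_sub]; exact (hu _).symm
  have hdecomp : ∀ n, S n - T n = (S n - β) + ((β - β') + (β' - T n)) := by
    intro n; ring
  by_cases hcδ : c < δ
  · -- the distance `v(s_n - t_n)` is eventually equal to `c`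
    have h1 := hsδ.1 c hcδ
    have h2 := htδ.1 c hcδ
    have heq : (fun n => max (dK v (s n) (t n) - expNeg δ) 0) =ᶠ[atTop]
        (fun _ => max (expNeg c - expNeg δ) 0) := by
      filter_upwards [h1, h2] with n h1n h2n
      have hbn : c < u (β' - T n) := by rw [hb n]; exact h2n
      have han : c < u (S n - β) := by
        rw [show S n - β = -(β - S n) by ring, AddValuation.map_neg, ha n]; exact h1n
      have e1 : u ((β - β') + (β' - T n)) = c :=
        AddValuation.map_add_eq_of_lt_left u hbn
      have e2 : u (S n - T n) = c := by
        rw [hdecomp n, AddValuation.map_add_eq_of_lt_right u (by rw [e1]; exact han)]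
        exact e1
      have : dK v (s n) (t n) = expNeg c := by
        unfold dK; rw [hst n, e2]
      rw [this]
    exact tendsto_nhds_unique key (tendsto_const_nhds.congr' heq.symm)
  · push_neg at hcδ
    have hrhs : max (expNeg c - expNeg δ) 0 = 0 :=
      max_eq_right (sub_nonpos.2 (expNeg_antitone hcδ))
    rw [hrhs]
    -- squeeze the sequence between 0 and a quantity tending to 0
    set M : ℕ → ℝ := fun n =>
      max (expNeg (v (s (n + 1) - s n))) (max (expNeg δ) (expNeg (v (t (n + 1) - t n))))
      with hM
    have hMlim : Tendsto M atTop (𝓝 (expNeg δ)) := by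
      have := (tendsto_expNeg_of_ordLim hsδ).max
        ((tendsto_const_nhds : Tendsto (fun _ : ℕ => expNeg δ) atTop _).max
          (tendsto_expNeg_of_ordLim htδ))
      simpa [hM, max_self] using this
    have hub : ∀ n, max (dK v (s n) (t n) - expNeg δ) 0 ≤ max (M n - expNeg δ) 0 := by
      intro n
      have hmin : min (u (S n - β)) (min c (u (β' - T n))) ≤ u (S n - T n) := by
        rw [hdecomp n]
        exact le_trans (min_le_min le_rfl (AddValuation.map_add u _ _))
          (AddValuation.map_add u _ _)
      have hmin2 : min (u (S n - β)) (min δ (u (β' - T n))) ≤ u (S n - T n) :=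
        le_trans (min_le_min le_rfl (min_le_min hcδ le_rfl)) hmin
      have hdK : dK v (s n) (t n) ≤ M n := by
        unfold dK
        rw [hst n]
        calc expNeg (u (S n - T n)) ≤ expNeg (min (u (S n - β)) (min δ (u (β' - T n)))) :=
              expNeg_antitone hmin2
          _ = max (expNeg (u (S n - β))) (max (expNeg δ) (expNeg (u (β' - T n)))) := by
              rw [expNeg_antitone.map_min, expNeg_antitone.map_min]
          _ = M n := by
              rw [hM, show S n - β = -(β - S n) by ring, AddValuation.map_neg, ha n, hb n]
      exact max_le_max (by linarith) le_rfl
    have hupper : Tendsto (fun n => max (M n - expNeg δ) 0) atTop (𝓝 0) := by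
      have := (hMlim.sub_const (expNeg δ)).max
        (tendsto_const_nhds : Tendsto (fun _ : ℕ => (0 : ℝ)) atTop _)
      simpa using this
    have hzero : Tendsto (fun n => max (dK v (s n) (t n) - expNeg δ) 0) atTop (𝓝 0) :=
      tendsto_of_tendsto_of_tendsto_of_le_of_le tendsto_const_nhds hupper
        (fun n => le_max_right _ _) hub
    exact tendsto_nhds_unique key hzero

end PaperPCZar
end
end

section
/- Let V be a rank-one non-discrete valuation domain. Suppose d is a metric on 𝒱 that induces the Zariski topology of 𝒱. Then, for every δ ∈ ℝ∪{∞}, the restriction of d to 𝒱(•,δ) is not equal to the distance d_δ. -/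
open Filter Topology TopologicalSpace Set Polynomial

noncomputable section

namespace PaperPCZar

variable {K : Type*} [Field K]

/-! ### Auxiliary valuation lemmas -/

lemma exists_val_real (v : AddValuation K (WithTop ℝ)) {x : K} (hx : x ≠ 0) :
    ∃ r : ℝ, v x = (r : WithTop ℝ) := by
  have h := (AddValuation.ne_top_iff v).mpr hx
  obtain ⟨r, hr⟩ := WithTop.ne_top_iff_exists.mp h
  exact ⟨r, hr.symm⟩

lemma val_ne_zero_of_real (v : AddValuation K (WithTop ℝ)) {x : K} {r : ℝ}
    (h : v x = (r : WithTop ℝ)) : x ≠ 0 := by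
  intro h0
  rw [h0, AddValuation.map_zero] at h
  exact (WithTop.coe_ne_top h.symm)

lemma val_natCast_nonneg (v : AddValuation K (WithTop ℝ)) (n : ℕ) : 0 ≤ v (n : K) := by
  induction n with
  | zero => simp only [Nat.cast_zero, AddValuation.map_zero]; exact le_top
  | succ n ih =>
    have : ((n + 1 : ℕ) : K) = (n : K) + 1 := by push_cast; ring
    rw [this]
    exact v.map_le_add ih (le_of_eq v.map_one.symm)

lemma wt_nsmul_coe (j : ℕ) (μ : ℝ) :
    j • ((μ : WithTop ℝ)) = (((j : ℝ) * μ : ℝ) : WithTop ℝ) := by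
  induction j with
  | zero => simp
  | succ n ih => rw [succ_nsmul, ih, ← WithTop.coe_add]; norm_cast; push_cast; ring

lemma wt_cases (x : WithTop ℝ) : x = ⊤ ∨ ∃ r : ℝ, x = (r : WithTop ℝ) := by
  induction x using WithTop.recTopCoe with
  | top => exact Or.inl rfl
  | coe r => exact Or.inr ⟨r, rfl⟩

lemma val_pow_real (v : AddValuation K (WithTop ℝ)) {x : K} {μ : ℝ}
    (hx : v x = (μ : WithTop ℝ)) (j : ℕ) :
    v (x ^ j) = (((j : ℝ) * μ : ℝ) : WithTop ℝ) := by
  rw [v.map_pow, hx, wt_nsmul_coe]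

lemma wt_solve {x : WithTop ℝ} {q p : ℝ} (h : x + (q : WithTop ℝ) = (p : WithTop ℝ)) :
    x = ((p - q : ℝ) : WithTop ℝ) := by
  induction x using WithTop.recTopCoe with
  | top => simp at h
  | coe r =>
    rw [← WithTop.coe_add] at h
    have := WithTop.coe_injective h
    exact_mod_cast by linarith [this]

/-- value of a quotient with real-valued numerator and denominator valuations. -/
lemma val_div_real (v : AddValuation K (WithTop ℝ)) {x y : K} {p q : ℝ}
    (hx : v x = (p : WithTop ℝ)) (hy : v y = (q : WithTop ℝ)) :
    v (x / y) = ((p - q : ℝ) : WithTop ℝ) := by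
  have hy0 : y ≠ 0 := val_ne_zero_of_real v hy
  have : v (x / y) + v y = v x := by
    rw [← v.map_mul, div_mul_cancel₀ _ hy0]
  rw [hy, hx] at this
  exact wt_solve this

lemma val_sum_strict (v : AddValuation K (WithTop ℝ)) {ι : Type*} [DecidableEq ι] (s : Finset ι) (a : ι → K)
    {i0 : ι} (h0 : i0 ∈ s) (ht : v (a i0) ≠ ⊤)
    (h : ∀ j ∈ s, j ≠ i0 → v (a i0) < v (a j)) :
    v (∑ j ∈ s, a j) = v (a i0) := by
  rw [← Finset.add_sum_erase s a h0]
  have hlt : v (a i0) < v (∑ j ∈ s.erase i0, a j) :=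
    v.map_lt_sum ht (fun j hj =>
      h j (Finset.mem_of_mem_erase hj) (Finset.ne_of_mem_erase hj))
  exact v.map_add_eq_of_lt_left hlt

/-- if the valuations of the coefficients are given by `α` on the support, and `I` is the
unique minimizer of `α j + j μ` on the support, then `v (f.eval z) = α I + I μ` for any
`z` of valuation `μ`. -/
lemma val_eval_min (v : AddValuation K (WithTop ℝ)) (f : K[X]) {z : K} {μ : ℝ}
    (hz : v z = (μ : WithTop ℝ)) {I : ℕ} (hI : I ∈ f.support) {α : ℕ → ℝ}
    (hα : ∀ j ∈ f.support, v (f.coeff j) = ((α j : ℝ) : WithTop ℝ))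
    (hmin : ∀ j ∈ f.support, j ≠ I → α I + (I : ℝ) * μ < α j + (j : ℝ) * μ) :
    v (f.eval z) = ((α I + (I : ℝ) * μ : ℝ) : WithTop ℝ) := by
  have hterm : ∀ j ∈ f.support, v (f.coeff j * z ^ j) = ((α j + (j : ℝ) * μ : ℝ) : WithTop ℝ) := by
    intro j hj
    rw [v.map_mul, hα j hj, val_pow_real v hz, ← WithTop.coe_add]
  have heval : f.eval z = ∑ j ∈ f.support, f.coeff j * z ^ j := by
    rw [Polynomial.eval_eq_sum, Polynomial.sum_def]
  rw [heval, val_sum_strict v f.support _ hI, hterm I hI]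
  · rw [hterm I hI]; exact WithTop.coe_ne_top
  · intro j hj hjI
    rw [hterm I hI, hterm j hj]
    exact_mod_cast hmin j hj hjI

lemma val_eval_ne_zero (v : AddValuation K (WithTop ℝ)) {f : K[X]} {z : K} {r : ℝ}
    (h : v (f.eval z) = (r : WithTop ℝ)) : f.eval z ≠ 0 :=
  val_ne_zero_of_real v h




lemma eventually_not_mem_finite {α : Type*} {t : ℕ → α} (ht : Function.Injective t)
    {S : Set α} (hS : S.Finite) : ∀ᶠ n in atTop, t n ∉ S := by
  rw [← Nat.cofinite_eq_atTop]
  exact (hS.preimage ht.injOn).eventually_cofinite_notMem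

lemma eventually_eval_ne_zero {t : ℕ → K} (ht : Function.Injective t) {g : K[X]} (hg : g ≠ 0) :
    ∀ᶠ n in atTop, g.eval (t n) ≠ 0 := by
  have := eventually_not_mem_finite ht (g.finite_setOf_isRoot hg)
  exact this.mono (fun n hn => hn)

/-- eventually, along a strictly monotone sequence `γ`, the quantities `α i + i γ n`
are pairwise distinct for `i` in the support of `f`. -/
lemma eventually_pairwise_ne (f : K[X]) (α : ℕ → ℝ) {γ : ℕ → ℝ} (hγ : StrictMono γ) :
    ∀ᶠ n in atTop, ∀ i ∈ f.support, ∀ j ∈ f.support, i ≠ j →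
      α i + (i : ℝ) * γ n ≠ α j + (j : ℝ) * γ n := by
  have key : ∀ i ∈ f.support, ∀ j ∈ f.support, i ≠ j → ∀ᶠ n in atTop,
      α i + (i : ℝ) * γ n ≠ α j + (j : ℝ) * γ n := by
    intro i _ j _ hij
    have hijR : (i : ℝ) ≠ (j : ℝ) := by exact_mod_cast hij
    set c : ℝ := (α j - α i) / ((i : ℝ) - (j : ℝ)) with hc
    rw [← Nat.cofinite_eq_atTop]
    have hsub : {n : ℕ | ¬ (α i + (i : ℝ) * γ n ≠ α j + (j : ℝ) * γ n)} ⊆ {n : ℕ | γ n = c} := by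
      intro n hn
      simp only [Set.mem_setOf_eq, not_not] at hn ⊢
      have hne : (i : ℝ) - (j : ℝ) ≠ 0 := sub_ne_zero.mpr hijR
      rw [hc, eq_div_iff hne]
      linear_combination hn
    have hfin : ({n : ℕ | γ n = c}).Finite := by
      apply Set.Subsingleton.finite
      intro n hn m hm
      exact hγ.injective (hn.trans hm.symm)
    exact ((hfin.subset hsub).eventually_cofinite_notMem).mono (fun n hn => by
      simpa using hn)
  have comb := (Filter.eventually_all_finite (Set.toFinite
      ((f.support : Set ℕ) ×ˢ (f.support : Set ℕ))) (l := (atTop : Filter ℕ))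
      (p := fun p n => p.1 ∈ f.support → p.2 ∈ f.support → p.1 ≠ p.2 →
        α p.1 + (p.1 : ℝ) * γ n ≠ α p.2 + (p.2 : ℝ) * γ n)).mpr ?_
  · exact comb.mono (fun n h i hi j hj hij =>
      h (i, j) (Set.mk_mem_prod (by simpa using hi) (by simpa using hj)) hi hj hij)
  · rintro ⟨i, j⟩ _
    by_cases hi : i ∈ f.support
    · by_cases hj : j ∈ f.support
      · by_cases hij : i ≠ j
        · exact (key i hi j hj hij).mono (fun n h _ _ _ => h)
        · exact Filter.Eventually.of_forall (fun n _ _ h => absurd h hij)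
      · exact Filter.Eventually.of_forall (fun n _ h => absurd h hj)
    · exact Filter.Eventually.of_forall (fun n h => absurd h hi)


/-- Strict dominance: shifting the evaluation point by something of bigger valuation
does not change the valuation of `f.eval`, provided the valuation at `z` realizes the
"Newton minimum" `N`. -/
lemma val_eval_shift (v : AddValuation K (WithTop ℝ)) (f : K[X]) {z w : K} {μ N : ℝ}
    (hz : v z = (μ : WithTop ℝ)) (hw : (μ : WithTop ℝ) < v w)
    (hEz : v (f.eval z) = (N : WithTop ℝ))
    (hNle : ∀ j : ℕ, (N : WithTop ℝ) ≤ v (f.coeff j) + (((j : ℝ) * μ : ℝ) : WithTop ℝ)) :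
    v (f.eval (z + w)) = (N : WithTop ℝ) := by
  set F := taylor z f with hF
  have hcoeff : ∀ i : ℕ, (N : WithTop ℝ) ≤ v (F.coeff i) + (((i : ℝ) * μ : ℝ) : WithTop ℝ) := by
    intro i
    rw [hF, Polynomial.taylor_coeff]
    set P := hasseDeriv i f with hP
    have heval : P.eval z = ∑ k ∈ P.support, P.coeff k * z ^ k := by
      rw [Polynomial.eval_eq_sum, Polynomial.sum_def]
    have hterm : ∀ k ∈ P.support,
        ((N - (i : ℝ) * μ : ℝ) : WithTop ℝ) ≤ v (P.coeff k * z ^ k) := by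
      intro k _
      have hPk : P.coeff k = ((k + i).choose i : K) * f.coeff (k + i) := by
        rw [hP, Polynomial.hasseDeriv_coeff]
      have h1 : (0 : WithTop ℝ) ≤ v (((k + i).choose i : K)) := val_natCast_nonneg v _
      have h2 := hNle (k + i)
      rw [hPk, v.map_mul, v.map_mul, val_pow_real v hz]
      rcases wt_cases (v (f.coeff (k + i))) with hvf | ⟨r, hvf⟩
      · have : v (((k + i).choose i : K)) + v (f.coeff (k + i)) + (((k:ℝ) * μ : ℝ) : WithTop ℝ)
            = ⊤ := by rw [hvf]; simp
        rw [this]; exact le_top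
      · rw [hvf] at h2 ⊢
        rcases wt_cases (v (((k + i).choose i : K))) with hvc | ⟨c, hvc⟩
        · rw [hvc]; simp
        · rw [hvc] at h1 ⊢
          rw [← WithTop.coe_add] at h2
          have h2' : N ≤ r + ((k:ℝ) + i) * μ := by exact_mod_cast h2
          have h1' : (0:ℝ) ≤ c := by exact_mod_cast h1
          rw [← WithTop.coe_add, ← WithTop.coe_add]
          apply WithTop.coe_le_coe.mpr
          nlinarith
    calc (N : WithTop ℝ) = ((N - (i:ℝ)*μ : ℝ) : WithTop ℝ) + (((i:ℝ)*μ : ℝ) : WithTop ℝ) := by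
          rw [← WithTop.coe_add]; norm_num
      _ ≤ v (P.eval z) + (((i:ℝ)*μ : ℝ) : WithTop ℝ) := by
          apply add_le_add_left
          rw [heval]
          exact v.map_le_sum hterm
  have heq : f.eval (z + w) = F.eval w := by
    rw [hF, Polynomial.taylor_eval, add_comm]
  have h0mem : 0 ∈ F.support := by
    rw [Polynomial.mem_support_iff, hF, Polynomial.taylor_coeff_zero]
    exact val_eval_ne_zero v hEz
  have h0val : v (F.coeff 0 * w ^ 0) = (N : WithTop ℝ) := by
    rw [pow_zero, mul_one, hF, Polynomial.taylor_coeff_zero, hEz]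
  have hFsum : F.eval w = ∑ i ∈ F.support, F.coeff i * w ^ i := by
    rw [Polynomial.eval_eq_sum, Polynomial.sum_def]
  rw [heq, hFsum, val_sum_strict v F.support _ h0mem, h0val]
  · rw [h0val]; exact WithTop.coe_ne_top
  · intro j hj hj0
    rw [h0val, v.map_mul]
    have hFj : v (F.coeff j) ≠ ⊤ := (AddValuation.ne_top_iff v).mpr
      (Polynomial.mem_support_iff.mp hj)
    obtain ⟨b, hb⟩ := WithTop.ne_top_iff_exists.mp hFj
    have hj1 : 1 ≤ j := Nat.one_le_iff_ne_zero.mpr hj0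
    have hcj := hcoeff j
    rw [← hb] at hcj ⊢
    rw [← WithTop.coe_add] at hcj
    have hcj' : N ≤ b + (j:ℝ) * μ := by exact_mod_cast hcj
    calc (N : WithTop ℝ) ≤ ((b + (j:ℝ) * μ : ℝ) : WithTop ℝ) := by exact_mod_cast hcj'
      _ < (b : WithTop ℝ) + v (w ^ j) := by
          rw [v.map_pow]
          rcases wt_cases (v w) with hvw | ⟨ww, hvw⟩
          · have hjtop : j • (⊤ : WithTop ℝ) = ⊤ := by
              cases j with
              | zero => exact absurd rfl hj0
              | succ m => rw [succ_nsmul]; simp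
            rw [hvw, hjtop]
            simp only [add_top]
            exact WithTop.coe_lt_top _
          · rw [hvw] at hw ⊢
            have hμw : μ < ww := by exact_mod_cast hw
            rw [wt_nsmul_coe, ← WithTop.coe_add]
            apply WithTop.coe_lt_coe.mpr
            have hj1' : (1:ℝ) ≤ (j:ℝ) := by exact_mod_cast hj1
            nlinarith

/-- the real "coefficient valuation" function of a polynomial. -/
def coeffVal (v : AddValuation K (WithTop ℝ)) (f : K[X]) (j : ℕ) : ℝ :=
  WithTop.untopD 0 (v (f.coeff j))

lemma coeffVal_spec (v : AddValuation K (WithTop ℝ)) (f : K[X]) :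
    ∀ j ∈ f.support, v (f.coeff j) = ((coeffVal v f j : ℝ) : WithTop ℝ) := by
  intro j hj
  have h : v (f.coeff j) ≠ ⊤ :=
    (AddValuation.ne_top_iff v).mpr (Polynomial.mem_support_iff.mp hj)
  rcases wt_cases (v (f.coeff j)) with h' | ⟨r, h'⟩
  · exact absurd h' h
  · rw [h', coeffVal, h', WithTop.untopD_coe]

/-- Orientation dichotomy for two affine functions along a monotone sequence. -/
lemma affine_orientation {γ : ℕ → ℝ} (hγ : StrictMono γ) (a b s t : ℝ) (hst : s ≠ t) :
    ∃ N, (∀ n ≥ N, a + s * γ n < b + t * γ n) ∨ (∀ n ≥ N, b + t * γ n < a + s * γ n) := by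
  rcases lt_or_gt_of_ne hst with h | h
  · -- s < t : d n := (b - a) + (t - s) γ n strictly increasing
    by_cases hex : ∃ n₀, 0 < (b - a) + (t - s) * γ n₀
    · obtain ⟨n₀, h₀⟩ := hex
      refine ⟨n₀, Or.inl fun n hn => ?_⟩
      have := hγ.monotone hn
      nlinarith
    · push_neg at hex
      refine ⟨0, Or.inr fun n _ => ?_⟩
      have h1 := hex n
      have h2 := hex (n + 1)
      have h3 := hγ (Nat.lt_succ_self n)
      by_contra hcon
      push_neg at hcon
      nlinarith
  · by_cases hex : ∃ n₀, 0 < (a - b) + (s - t) * γ n₀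
    · obtain ⟨n₀, h₀⟩ := hex
      refine ⟨n₀, Or.inr fun n hn => ?_⟩
      have := hγ.monotone hn
      nlinarith
    · push_neg at hex
      refine ⟨0, Or.inl fun n _ => ?_⟩
      have h1 := hex n
      have h2 := hex (n + 1)
      have h3 := hγ (Nat.lt_succ_self n)
      by_contra hcon
      push_neg at hcon
      nlinarith

/-- Structure lemma: along `n ↦ e + x n` with `v (x n) = γ n` strictly increasing, the
valuation of `f.eval` is eventually given by a fixed affine function of `γ n`. -/
lemma exists_affine (v : AddValuation K (WithTop ℝ)) (f : K[X]) (hf : f ≠ 0) (e : K)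
    (x : ℕ → K) {γ : ℕ → ℝ} (hx : ∀ n, v (x n) = ((γ n : ℝ) : WithTop ℝ))
    (hγ : StrictMono γ) :
    ∃ (A : ℝ) (m : ℕ) (N : ℕ), ∀ n ≥ N,
      v (f.eval (e + x n)) = ((A + (m : ℝ) * γ n : ℝ) : WithTop ℝ) := by
  classical
  set F := taylor e f with hF
  have hF0 : F ≠ 0 := by
    intro h
    apply hf
    exact Polynomial.taylor_injective e (by rw [map_zero]; exact h)
  set α : ℕ → ℝ := coeffVal v F with hα
  have hαspec := coeffVal_spec v F
  -- orientation threshold for each pair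
  have hor : ∀ p : ℕ × ℕ, ∃ N, p.1 ≠ p.2 →
      (∀ n ≥ N, α p.1 + (p.1 : ℝ) * γ n < α p.2 + (p.2 : ℝ) * γ n) ∨
      (∀ n ≥ N, α p.2 + (p.2 : ℝ) * γ n < α p.1 + (p.1 : ℝ) * γ n) := by
    rintro ⟨i, j⟩
    by_cases hij : i = j
    · exact ⟨0, fun h => absurd hij h⟩
    · have hijR : (i : ℝ) ≠ (j : ℝ) := by exact_mod_cast hij
      obtain ⟨N, hN⟩ := affine_orientation hγ (α i) (α j) (i : ℝ) (j : ℝ) hijR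
      exact ⟨N, fun _ => hN⟩
  choose Nor hNor using hor
  set N₀ : ℕ := (F.support ×ˢ F.support).sup (fun p => Nor p) with hN₀
  have hsupne : F.support.Nonempty := Polynomial.nonempty_support_iff.mpr hF0
  obtain ⟨I, hImem, hImin⟩ :=
    F.support.exists_min_image (fun j => α j + (j : ℝ) * γ N₀) hsupne
  refine ⟨α I, I, N₀, fun n hn => ?_⟩
  have hstrict : ∀ j ∈ F.support, j ≠ I → α I + (I : ℝ) * γ n < α j + (j : ℝ) * γ n := by
    intro j hj hjI
    have hmem : (I, j) ∈ F.support ×ˢ F.support := Finset.mk_mem_product hImem hj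
    have hle : Nor (I, j) ≤ N₀ := Finset.le_sup hmem
    rcases hNor (I, j) (fun h => hjI h.symm) with hcase | hcase
    · exact hcase n (le_trans hle hn)
    · exact absurd (hImin j hj) (not_le.mpr (hcase N₀ hle))
  have := val_eval_min v F (hx n) hImem hαspec hstrict
  rw [← this, hF, Polynomial.taylor_eval, add_comm]

lemma val_eval_eq (v : AddValuation K (WithTop ℝ)) (φ : RatFunc K) (a : K) {p q : ℝ}
    (hnum : v (φ.num.eval a) = (p : WithTop ℝ)) (hden : v (φ.denom.eval a) = (q : WithTop ℝ)) :
    v (RatFunc.eval (RingHom.id K) a φ) = ((p - q : ℝ) : WithTop ℝ) := by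
  have heq : RatFunc.eval (RingHom.id K) a φ = φ.num.eval a / φ.denom.eval a := rfl
  rw [heq, val_div_real v hnum hden]

lemma val_eval_nonneg_iff (v : AddValuation K (WithTop ℝ)) (φ : RatFunc K) (a : K) {p q : ℝ}
    (hnum : v (φ.num.eval a) = (p : WithTop ℝ)) (hden : v (φ.denom.eval a) = (q : WithTop ℝ)) :
    (0 ≤ v (RatFunc.eval (RingHom.id K) a φ)) ↔ q ≤ p := by
  rw [val_eval_eq v φ a hnum hden]
  rw [show (0 : WithTop ℝ) = ((0:ℝ) : WithTop ℝ) from rfl, WithTop.coe_le_coe]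
  constructor <;> intro h <;> linarith

/-- The valuation subring of `K(X)` attached to the pseudo-convergent sequence
`n ↦ e + x n`. -/
def VERing (v : AddValuation K (WithTop ℝ)) (e : K) (x : ℕ → K) (γ : ℕ → ℝ)
    (hx : ∀ n, v (x n) = ((γ n : ℝ) : WithTop ℝ)) (hγ : StrictMono γ) :
    ValuationSubring (RatFunc K) := by
  have hinj : Function.Injective (fun n => e + x n) := by
    intro n m hnm
    have hxx : x n = x m := add_left_cancel hnm
    have : v (x n) = v (x m) := by rw [hxx]
    rw [hx n, hx m] at this
    exact hγ.injective (by exact_mod_cast this)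
  -- eventual nonvanishing of a nonzero polynomial along the sequence
  have hnz : ∀ (g : K[X]), g ≠ 0 → ∀ᶠ n in atTop, g.eval (e + x n) ≠ 0 := by
    intro g hg
    exact eventually_eval_ne_zero hinj hg
  -- eventual affine description of v (eval φ (t n)) for φ ≠ 0
  have haff : ∀ (φ : RatFunc K), φ ≠ 0 → ∃ (c s : ℝ) (N : ℕ), ∀ n ≥ N,
      v (RatFunc.eval (RingHom.id K) (e + x n) φ) = ((c + s * γ n : ℝ) : WithTop ℝ) := by
    intro φ hφ
    obtain ⟨A, m, N₁, h₁⟩ := exists_affine v φ.num (RatFunc.num_ne_zero hφ) e x hx hγ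
    obtain ⟨B, k, N₂, h₂⟩ := exists_affine v φ.denom (RatFunc.denom_ne_zero φ) e x hx hγ
    refine ⟨A - B, (m : ℝ) - (k : ℝ), max N₁ N₂, fun n hn => ?_⟩
    have e₁ := h₁ n (le_trans (le_max_left _ _) hn)
    have e₂ := h₂ n (le_trans (le_max_right _ _) hn)
    rw [val_eval_eq v φ _ e₁ e₂]
    exact WithTop.coe_inj.mpr (by ring)
  refine
  { carrier := VESet v (fun n => e + x n)
    zero_mem' := by
      simp only [VESet, Set.mem_setOf_eq, RatFunc.eval_zero]
      exact Filter.Eventually.of_forall (fun n => by rw [AddValuation.map_zero]; exact le_top)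
    one_mem' := by
      simp only [VESet, Set.mem_setOf_eq, RatFunc.eval_one]
      exact Filter.Eventually.of_forall (fun n => le_of_eq v.map_one.symm)
    add_mem' := by
      intro φ ψ hφ hψ
      simp only [VESet, Set.mem_setOf_eq] at hφ hψ ⊢
      have hd₁ := hnz φ.denom (RatFunc.denom_ne_zero φ)
      have hd₂ := hnz ψ.denom (RatFunc.denom_ne_zero ψ)
      filter_upwards [hφ, hψ, hd₁, hd₂] with n h1 h2 h3 h4
      have h3' : Polynomial.eval₂ (RingHom.id K) (e + x n) φ.denom ≠ 0 := h3
      have h4' : Polynomial.eval₂ (RingHom.id K) (e + x n) ψ.denom ≠ 0 := h4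
      have : RatFunc.eval (RingHom.id K) (e + x n) (φ + ψ) =
          RatFunc.eval (RingHom.id K) (e + x n) φ + RatFunc.eval (RingHom.id K) (e + x n) ψ :=
        RatFunc.eval_add (f := RingHom.id K) (a := e + x n) h3' h4'
      rw [this]
      exact v.map_le_add h1 h2
    mul_mem' := by
      intro φ ψ hφ hψ
      simp only [VESet, Set.mem_setOf_eq] at hφ hψ ⊢
      have hd₁ := hnz φ.denom (RatFunc.denom_ne_zero φ)
      have hd₂ := hnz ψ.denom (RatFunc.denom_ne_zero ψ)
      filter_upwards [hφ, hψ, hd₁, hd₂] with n h1 h2 h3 h4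
      have h3' : Polynomial.eval₂ (RingHom.id K) (e + x n) φ.denom ≠ 0 := h3
      have h4' : Polynomial.eval₂ (RingHom.id K) (e + x n) ψ.denom ≠ 0 := h4
      have : RatFunc.eval (RingHom.id K) (e + x n) (φ * ψ) =
          RatFunc.eval (RingHom.id K) (e + x n) φ * RatFunc.eval (RingHom.id K) (e + x n) ψ :=
        RatFunc.eval_mul (f := RingHom.id K) (a := e + x n) h3' h4'
      rw [this, v.map_mul]
      exact add_nonneg h1 h2
    neg_mem' := by
      intro φ hφ
      simp only [VESet, Set.mem_setOf_eq] at hφ ⊢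
      have hd₁ := hnz φ.denom (RatFunc.denom_ne_zero φ)
      filter_upwards [hφ, hd₁] with n h1 h3
      have h3' : Polynomial.eval₂ (RingHom.id K) (e + x n) φ.denom ≠ 0 := h3
      have hm1 : RatFunc.eval (RingHom.id K) (e + x n) (-1 : RatFunc K) = -1 := by
        have : (-1 : RatFunc K) = algebraMap (K[X]) (RatFunc K) (-1) := by
          rw [map_neg, map_one]
        rw [this, RatFunc.eval_algebraMap]
        simp
      have hdm1 : Polynomial.eval₂ (RingHom.id K) (e + x n) ((-1 : RatFunc K).denom) ≠ 0 := by
        have : (-1 : RatFunc K) = algebraMap (K[X]) (RatFunc K) (-1) := by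
          rw [map_neg, map_one]
        rw [this, RatFunc.denom_algebraMap]
        simp
      have : RatFunc.eval (RingHom.id K) (e + x n) (-φ) =
          RatFunc.eval (RingHom.id K) (e + x n) (-1 : RatFunc K) *
            RatFunc.eval (RingHom.id K) (e + x n) φ := by
        rw [← RatFunc.eval_mul (f := RingHom.id K) (a := e + x n) hdm1 h3', neg_one_mul]
      rw [this, hm1, neg_one_mul, v.map_neg]
      exact h1
    mem_or_inv_mem' := by
      intro φ
      rcases eq_or_ne φ 0 with rfl | hφ0
      · left
        simp only [VESet, Set.mem_setOf_eq, RatFunc.eval_zero]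
        exact Filter.Eventually.of_forall (fun n => by rw [AddValuation.map_zero]; exact le_top)
      · obtain ⟨c, s, N, hcs⟩ := haff φ hφ0
        have hinv0 : φ⁻¹ ≠ 0 := inv_ne_zero hφ0
        -- eventual inverse valuation relation
        have hrel : ∀ᶠ n in atTop, v (RatFunc.eval (RingHom.id K) (e + x n) φ⁻¹)
            = ((-(c + s * γ n) : ℝ) : WithTop ℝ) := by
          have hd₁ := hnz φ.denom (RatFunc.denom_ne_zero φ)
          have hd₂ := hnz φ⁻¹.denom (RatFunc.denom_ne_zero φ⁻¹)
          filter_upwards [hd₁, hd₂, Filter.eventually_ge_atTop N] with n h3 h4 hnN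
          have h3' : Polynomial.eval₂ (RingHom.id K) (e + x n) φ.denom ≠ 0 := h3
          have h4' : Polynomial.eval₂ (RingHom.id K) (e + x n) φ⁻¹.denom ≠ 0 := h4
          have hmul : RatFunc.eval (RingHom.id K) (e + x n) φ⁻¹ *
              RatFunc.eval (RingHom.id K) (e + x n) φ = 1 := by
            rw [← RatFunc.eval_mul (f := RingHom.id K) (a := e + x n) h4' h3', inv_mul_cancel₀ hφ0, RatFunc.eval_one]
          have := congrArg v hmul
          rw [v.map_mul, v.map_one, hcs n hnN] at this
          have h5 := wt_solve (p := 0) (by rw [this]; norm_num)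
          rw [h5]
          norm_num
        rcases le_or_gt 0 s with hs | hs
        · by_cases hex : ∃ n₀ ≥ N, 0 ≤ c + s * γ n₀
          · left
            obtain ⟨n₀, hn₀, h₀⟩ := hex
            simp only [VESet, Set.mem_setOf_eq]
            rw [Filter.eventually_atTop]
            refine ⟨n₀, fun n hn => ?_⟩
            rw [hcs n (le_trans hn₀ hn)]
            have := hγ.monotone hn
            have h0r : (0:ℝ) ≤ c + s * γ n := by nlinarith
            exact_mod_cast h0r
          · right
            push_neg at hex
            simp only [VESet, Set.mem_setOf_eq]
            filter_upwards [hrel, Filter.eventually_ge_atTop N] with n h1 hnN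
            rw [h1]
            have := le_of_lt (hex n hnN)
            have h0r : (0:ℝ) ≤ -(c + s * γ n) := by linarith
            exact_mod_cast h0r
        · by_cases hex : ∃ n₀ ≥ N, c + s * γ n₀ ≤ 0
          · right
            obtain ⟨n₀, hn₀, h₀⟩ := hex
            simp only [VESet, Set.mem_setOf_eq]
            filter_upwards [hrel, Filter.eventually_ge_atTop n₀] with n h1 hnn₀
            rw [h1]
            have := hγ.monotone hnn₀
            have h0r : (0:ℝ) ≤ -(c + s * γ n) := by nlinarith
            exact_mod_cast h0r
          · left
            push_neg at hex
            simp only [VESet, Set.mem_setOf_eq]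
            rw [Filter.eventually_atTop]
            refine ⟨N, fun n hn => ?_⟩
            rw [hcs n hn]
            have := le_of_lt (hex n hn)
            exact_mod_cast this }

lemma VERing_coe (v : AddValuation K (WithTop ℝ)) (e : K) (x : ℕ → K) (γ : ℕ → ℝ)
    (hx : ∀ n, v (x n) = ((γ n : ℝ) : WithTop ℝ)) (hγ : StrictMono γ) :
    ((VERing v e x γ hx hγ : ValuationSubring (RatFunc K)) : Set (RatFunc K)) =
      VESet v (fun n => e + x n) := rfl

lemma VERing_mem (v : AddValuation K (WithTop ℝ)) (e : K) (x : ℕ → K) (γ : ℕ → ℝ)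
    (hx : ∀ n, v (x n) = ((γ n : ℝ) : WithTop ℝ)) (hγ : StrictMono γ) (φ : RatFunc K) :
    φ ∈ VERing v e x γ hx hγ ↔ φ ∈ VESet v (fun n => e + x n) := Iff.rfl

/-- Key transfer lemma: if `φ ∈ V_E` for the sequence `s'` (with strictly increasing
real values `γ'`), then for all large `M`, `φ` is integral at all points `z + w` with
`v z = γ' M` and `v w > γ' M`. -/
lemma key_transfer (v : AddValuation K (WithTop ℝ)) (s' : ℕ → K) {γ' : ℕ → ℝ}
    (hs' : ∀ n, v (s' n) = ((γ' n : ℝ) : WithTop ℝ)) (hγ' : StrictMono γ')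
    (φ : RatFunc K) (hφ : φ ∈ VESet v s') :
    ∀ᶠ M in atTop, ∀ z w : K, v z = ((γ' M : ℝ) : WithTop ℝ) →
      ((γ' M : ℝ) : WithTop ℝ) < v w →
      0 ≤ v (RatFunc.eval (RingHom.id K) (z + w) φ) := by
  rcases eq_or_ne φ 0 with rfl | hφ0
  · exact Filter.Eventually.of_forall (fun M z w _ _ => by
      rw [RatFunc.eval_zero, AddValuation.map_zero]; exact le_top)
  have hf : φ.num ≠ 0 := RatFunc.num_ne_zero hφ0
  have hg : φ.denom ≠ 0 := RatFunc.denom_ne_zero φ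
  have E1 := eventually_pairwise_ne φ.num (coeffVal v φ.num) hγ'
  have E2 := eventually_pairwise_ne φ.denom (coeffVal v φ.denom) hγ'
  have E3 : ∀ᶠ n in atTop, 0 ≤ v (RatFunc.eval (RingHom.id K) (s' n) φ) := hφ
  filter_upwards [E1, E2, E3] with M h1 h2 h3
  intro z w hz hw
  obtain ⟨I, hImem, hImin⟩ := φ.num.support.exists_min_image
    (fun j => coeffVal v φ.num j + (j : ℝ) * γ' M) (Polynomial.nonempty_support_iff.mpr hf)
  obtain ⟨J, hJmem, hJmin⟩ := φ.denom.support.exists_min_image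
    (fun j => coeffVal v φ.denom j + (j : ℝ) * γ' M) (Polynomial.nonempty_support_iff.mpr hg)
  have hIstrict : ∀ j ∈ φ.num.support, j ≠ I →
      coeffVal v φ.num I + (I : ℝ) * γ' M < coeffVal v φ.num j + (j : ℝ) * γ' M :=
    fun j hj hjI => lt_of_le_of_ne (hImin j hj) (h1 I hImem j hj (Ne.symm hjI))
  have hJstrict : ∀ j ∈ φ.denom.support, j ≠ J →
      coeffVal v φ.denom J + (J : ℝ) * γ' M < coeffVal v φ.denom j + (j : ℝ) * γ' M :=
    fun j hj hjJ => lt_of_le_of_ne (hJmin j hj) (h2 J hJmem j hj (Ne.symm hjJ))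
  have hNfz : v (φ.num.eval z) = ((coeffVal v φ.num I + (I : ℝ) * γ' M : ℝ) : WithTop ℝ) :=
    val_eval_min v φ.num hz hImem (coeffVal_spec v φ.num) hIstrict
  have hNgz : v (φ.denom.eval z) = ((coeffVal v φ.denom J + (J : ℝ) * γ' M : ℝ) : WithTop ℝ) :=
    val_eval_min v φ.denom hz hJmem (coeffVal_spec v φ.denom) hJstrict
  have hNfM : v (φ.num.eval (s' M)) = ((coeffVal v φ.num I + (I : ℝ) * γ' M : ℝ) : WithTop ℝ) :=
    val_eval_min v φ.num (hs' M) hImem (coeffVal_spec v φ.num) hIstrict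
  have hNgM : v (φ.denom.eval (s' M)) =
      ((coeffVal v φ.denom J + (J : ℝ) * γ' M : ℝ) : WithTop ℝ) :=
    val_eval_min v φ.denom (hs' M) hJmem (coeffVal_spec v φ.denom) hJstrict
  have hineq : coeffVal v φ.denom J + (J : ℝ) * γ' M ≤ coeffVal v φ.num I + (I : ℝ) * γ' M :=
    (val_eval_nonneg_iff v φ (s' M) hNfM hNgM).mp h3
  have hNle_f : ∀ j : ℕ, ((coeffVal v φ.num I + (I : ℝ) * γ' M : ℝ) : WithTop ℝ) ≤
      v (φ.num.coeff j) + (((j : ℝ) * γ' M : ℝ) : WithTop ℝ) := by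
    intro j
    by_cases hj : j ∈ φ.num.support
    · rw [coeffVal_spec v φ.num j hj, ← WithTop.coe_add]
      exact WithTop.coe_le_coe.mpr (hImin j hj)
    · rw [Polynomial.notMem_support_iff.mp hj, AddValuation.map_zero, top_add]
      exact le_top
  have hNle_g : ∀ j : ℕ, ((coeffVal v φ.denom J + (J : ℝ) * γ' M : ℝ) : WithTop ℝ) ≤
      v (φ.denom.coeff j) + (((j : ℝ) * γ' M : ℝ) : WithTop ℝ) := by
    intro j
    by_cases hj : j ∈ φ.denom.support
    · rw [coeffVal_spec v φ.denom j hj, ← WithTop.coe_add]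
      exact WithTop.coe_le_coe.mpr (hJmin j hj)
    · rw [Polynomial.notMem_support_iff.mp hj, AddValuation.map_zero, top_add]
      exact le_top
  have hfzw := val_eval_shift v φ.num hz hw hNfz hNle_f
  have hgzw := val_eval_shift v φ.denom hz hw hNgz hNle_g
  exact (val_eval_nonneg_iff v φ (z + w) hfzw hgzw).mpr hineq

/-- Recursive construction of a strictly monotone sequence in a dense set with
prescribed lower and upper bounds. -/
lemma exists_seq {S : Set ℝ} (hS : Dense S) (lo : ℕ → ℝ) (hi : ℕ → ℝ)
    (hmono : Monotone hi) (hlh : ∀ n, lo n < hi n) :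
    ∃ γ : ℕ → ℝ, StrictMono γ ∧ (∀ n, γ n ∈ S) ∧ (∀ n, lo n < γ n) ∧ (∀ n, γ n < hi n) := by
  classical
  have step : ∀ a b : ℝ, a < b → ∃ c, c ∈ S ∧ c ∈ Set.Ioo a b := by
    intro a b hab
    obtain ⟨c, hcS, hc⟩ := hS.exists_mem_open isOpen_Ioo (Set.nonempty_Ioo.mpr hab)
    exact ⟨c, hcS, hc⟩
  let pick : ℝ → ℝ → ℝ := fun a b => if h : a < b then (step a b h).choose else 0
  have pick_spec : ∀ a b : ℝ, a < b → pick a b ∈ S ∧ a < pick a b ∧ pick a b < b := by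
    intro a b hab
    simp only [pick, dif_pos hab]
    obtain ⟨h1, h2⟩ := (step a b hab).choose_spec
    exact ⟨h1, h2.1, h2.2⟩
  let γ : ℕ → ℝ := fun n => Nat.rec (pick (lo 0) (hi 0))
    (fun m prev => pick (max prev (lo (m + 1))) (hi (m + 1))) n
  have hγ0 : γ 0 = pick (lo 0) (hi 0) := rfl
  have hγs : ∀ n, γ (n + 1) = pick (max (γ n) (lo (n + 1))) (hi (n + 1)) := fun n => rfl
  have hinv : ∀ n, γ n ∈ S ∧ lo n < γ n ∧ γ n < hi n := by
    intro n
    induction n with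
    | zero =>
      obtain ⟨h1, h2, h3⟩ := pick_spec (lo 0) (hi 0) (hlh 0)
      exact ⟨h1, h2, h3⟩
    | succ m ih =>
      have hlt : max (γ m) (lo (m + 1)) < hi (m + 1) :=
        max_lt (lt_of_lt_of_le ih.2.2 (hmono (Nat.le_succ m))) (hlh (m + 1))
      obtain ⟨h1, h2, h3⟩ := pick_spec _ _ hlt
      rw [← hγs m] at h1 h2 h3
      exact ⟨h1, lt_of_le_of_lt (le_max_right _ _) h2, h3⟩
  have hstrict : StrictMono γ := by
    apply strictMono_nat_of_lt_succ
    intro n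
    have hlt : max (γ n) (lo (n + 1)) < hi (n + 1) :=
      max_lt (lt_of_lt_of_le (hinv n).2.2 (hmono (Nat.le_succ n))) (hlh (n + 1))
    have := (pick_spec _ _ hlt).2.1
    rw [← hγs n] at this
    exact lt_of_le_of_lt (le_max_left _ _) this
  exact ⟨γ, hstrict, fun n => (hinv n).1, fun n => (hinv n).2.1, fun n => (hinv n).2.2⟩

lemma val_seq_diff (v : AddValuation K (WithTop ℝ)) {x : ℕ → K} {γ : ℕ → ℝ}
    (hx : ∀ n, v (x n) = ((γ n : ℝ) : WithTop ℝ)) (hγ : StrictMono γ)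
    {n m : ℕ} (hnm : n < m) : v (x m - x n) = ((γ n : ℝ) : WithTop ℝ) := by
  rw [v.map_sub_swap, sub_eq_add_neg, v.map_add_eq_of_lt_left, hx n]
  rw [v.map_neg, hx n, hx m]
  exact_mod_cast hγ hnm

/-- In a generated topology, every open set containing a point contains a finite
intersection of generators containing the point. -/
lemma generateOpen_finite_inter {X : Type*} {S : Set (Set X)} {O : Set X}
    (hO : TopologicalSpace.GenerateOpen S O) :
    ∀ x ∈ O, ∃ T : Set (Set X), T.Finite ∧ T ⊆ S ∧ x ∈ ⋂₀ T ∧ ⋂₀ T ⊆ O := by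
  induction hO with
  | basic u hu =>
    intro x hx
    exact ⟨{u}, Set.finite_singleton _, Set.singleton_subset_iff.mpr hu,
      by simpa using hx, by simp⟩
  | univ =>
    intro x _
    exact ⟨∅, Set.finite_empty, Set.empty_subset _, by simp, by simp⟩
  | inter a b _ _ iha ihb =>
    intro x hx
    obtain ⟨T1, hf1, hs1, hm1, hl1⟩ := iha x hx.1
    obtain ⟨T2, hf2, hs2, hm2, hl2⟩ := ihb x hx.2
    refine ⟨T1 ∪ T2, hf1.union hf2, Set.union_subset hs1 hs2, ?_, ?_⟩
    · rw [Set.sInter_union]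
      exact ⟨hm1, hm2⟩
    · rw [Set.sInter_union]
      exact fun y hy => ⟨hl1 hy.1, hl2 hy.2⟩
  | sUnion σ _ ih =>
    intro x hx
    obtain ⟨u, hu, hxu⟩ := hx
    obtain ⟨T, hf, hs, hm, hl⟩ := ih u hu x hxu
    exact ⟨T, hf, hs, hm, fun y hy => Set.mem_sUnion.mpr ⟨u, hu, hl hy⟩⟩


/-- If `V` is rank-one non-discrete and `d` is a metric on `𝒱` inducing
the Zariski topology, then for every `δ ∈ ℝ ∪ {∞}` the restriction of `d` to `𝒱(•,δ)`
is not equal to `d_δ`. -/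
theorem statement6 (v : AddValuation K (WithTop ℝ)) (hv : IsRankOne v)
    (hnd : Dense (valueGroup v))
    (dd : WithTop ℝ → ValuationSubring (RatFunc K) → ValuationSubring (RatFunc K) → ℝ)
    (hdd : ∀ δ : WithTop ℝ, IsDistδ v δ (dd δ))
    (d : ↥(VV v) → ↥(VV v) → ℝ) (hd : MetrizedBy (zarSub (VV v)) d) :
    ∀ δ : WithTop ℝ, ¬ (∀ W W' : ↥(VV v),
      (W : ValuationSubring (RatFunc K)) ∈ VVδ v δ →
      (W' : ValuationSubring (RatFunc K)) ∈ VVδ v δ →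
      d W W' = dd δ (W : ValuationSubring (RatFunc K))
        (W' : ValuationSubring (RatFunc K))) := by
  classical
  obtain ⟨hsymm, hzero, htri, htop⟩ := hd
  intro δ H
  -- pick a real δ' strictly below δ
  obtain ⟨δ', hδ'⟩ : ∃ r : ℝ, (r : WithTop ℝ) < δ := by
    rcases wt_cases δ with rfl | ⟨r, rfl⟩
    · exact ⟨0, WithTop.coe_lt_top 0⟩
    · exact ⟨r - 1, by exact_mod_cast sub_one_lt r⟩
  -- values for the auxiliary sequence, inside (δ' - 1, δ')
  obtain ⟨γ', hγ'mono, hγ'S, hγ'lo, hγ'hi⟩ :=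
    exists_seq hnd (fun _ => δ' - 1) (fun _ => δ') monotone_const (fun _ => by show δ' - 1 < δ'; linarith)
  choose x' hx' using fun n => (hγ'S n : ∃ y : K, v y = ((γ' n : ℝ) : WithTop ℝ))
  have hs'val : ∀ n, v ((fun n => (0 : K) + x' n) n) = ((γ' n : ℝ) : WithTop ℝ) := by
    intro n; simpa using hx' n
  have hPCs' : IsPC v (fun n => (0 : K) + x' n) := by
    intro n
    have h1 : v ((0 + x' (n + 1)) - (0 + x' n)) = ((γ' n : ℝ) : WithTop ℝ) := by
      have : (0 + x' (n + 1)) - (0 + x' n) = x' (n + 1) - x' n := by ring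
      rw [this, val_seq_diff v hx' hγ'mono (Nat.lt_succ_self n)]
    have h2 : v ((0 + x' (n + 2)) - (0 + x' (n + 1))) = ((γ' (n + 1) : ℝ) : WithTop ℝ) := by
      have : (0 + x' (n + 2)) - (0 + x' (n + 1)) = x' (n + 2) - x' (n + 1) := by ring
      rw [this, val_seq_diff v hx' hγ'mono (Nat.lt_succ_self (n + 1))]
    rw [h1, h2]
    exact_mod_cast hγ'mono (Nat.lt_succ_self n)
  set U : ValuationSubring (RatFunc K) := VERing v 0 x' γ' hx' hγ'mono with hUdef
  have hUVV : U ∈ VV v := ⟨fun n => (0 : K) + x' n, hPCs', rfl⟩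
  set U' : ↥(VV v) := ⟨U, hUVV⟩ with hU'def
  -- the basic positive gap
  set ε0 : ℝ := Real.exp (-δ') - expNeg δ with hε0def
  have hexpδ : expNeg δ < Real.exp (-δ') := by
    rcases wt_cases δ with hδtop | ⟨r, hδr⟩
    · rw [hδtop]
      have : expNeg (⊤ : WithTop ℝ) = 0 := rfl
      rw [this]
      exact Real.exp_pos _
    · rw [hδr]
      have : expNeg ((r : ℝ) : WithTop ℝ) = Real.exp (-r) := rfl
      rw [this]
      apply Real.exp_lt_exp.mpr
      rw [hδr] at hδ'
      have : δ' < r := by exact_mod_cast hδ'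
      linarith
  have hε0pos : 0 < ε0 := by rw [hε0def]; linarith
  -- the open ball around U'
  set Bε : Set ↥(VV v) := {y | d U' y < ε0 / 2} with hBdef
  have hBopen : IsOpen[zarSub (VV v)] Bε := by
    rw [htop]
    exact TopologicalSpace.GenerateOpen.basic _ ⟨U', ε0 / 2, by linarith, rfl⟩
  have hBopen' : IsOpen[(zarTop (RatFunc K)).induced (Subtype.val : ↥(VV v) → _)] Bε := hBopen
  obtain ⟨O, hOopen, hOB⟩ := (isOpen_induced_iff (t := zarTop (RatFunc K))).mp hBopen'
  have hUBε : U' ∈ Bε := by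
    have : d U' U' = 0 := (hzero U' U').mpr rfl
    simp only [hBdef, Set.mem_setOf_eq, this]
    linarith
  have hUO : U ∈ O := by
    rw [← hOB] at hUBε
    exact hUBε
  have hOgen : TopologicalSpace.GenerateOpen
      {Uu | ∃ φ : RatFunc K, Uu = {W : ValuationSubring (RatFunc K) | φ ∈ W}} O := hOopen
  obtain ⟨T, hTfin, hTsub, hUT, hTO⟩ := generateOpen_finite_inter hOgen U hUO
  -- choose a rational function for each generator in T
  choose! ψ hψ using fun t (ht : t ∈ T) => hTsub ht
  have hψU : ∀ t, t ∈ T → ψ t ∈ VESet v (fun n => (0 : K) + x' n) := by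
    intro t ht
    have hUt : U ∈ t := hUT t ht
    rw [hψ t ht] at hUt
    exact hUt
  -- the key transfer property, uniformly over the finitely many generators
  have hkey : ∀ t ∈ T, ∀ᶠ M in atTop, ∀ z w : K, v z = ((γ' M : ℝ) : WithTop ℝ) →
      ((γ' M : ℝ) : WithTop ℝ) < v w →
      0 ≤ v (RatFunc.eval (RingHom.id K) (z + w) (ψ t)) :=
    fun t ht => key_transfer v _ hs'val hγ'mono (ψ t) (hψU t ht)
  have hall := (Filter.eventually_all_finite hTfin (l := (atTop : Filter ℕ))
      (p := fun t M => ∀ z w : K, v z = ((γ' M : ℝ) : WithTop ℝ) →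
        ((γ' M : ℝ) : WithTop ℝ) < v w →
        0 ≤ v (RatFunc.eval (RingHom.id K) (z + w) (ψ t)))).mpr hkey
  obtain ⟨M0, hM0⟩ := Filter.eventually_atTop.mp hall
  -- values for the breadth-δ sequences, above γ' (M0 + 1)
  obtain ⟨γ, hγmono, hγS, hγlo, hγbr⟩ : ∃ γ : ℕ → ℝ, StrictMono γ ∧
      (∀ n, γ n ∈ valueGroup v) ∧ (∀ n, γ' (M0 + 1) < γ n) ∧
      OrdLim (fun n => ((γ n : ℝ) : WithTop ℝ)) δ := by
    rcases wt_cases δ with hδtop | ⟨r, hδr⟩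
    · obtain ⟨γ, h1, h2, h3, h4⟩ := exists_seq hnd
        (fun n => max (γ' (M0 + 1)) n) (fun n => max (γ' (M0 + 1)) n + 1)
        (fun a b hab => by
          have : (a : ℝ) ≤ b := by exact_mod_cast hab
          exact add_le_add_left (max_le_max le_rfl this) 1)
        (fun n => lt_add_one _)
      refine ⟨γ, h1, h2, fun n => lt_of_le_of_lt (le_max_left _ _) (h3 n), ?_, ?_⟩
      · intro a ha
        rw [hδtop] at ha
        obtain ⟨ar, har⟩ := WithTop.ne_top_iff_exists.mp (ne_top_of_lt ha)
        obtain ⟨N, hN⟩ := exists_nat_gt ar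
        rw [Filter.eventually_atTop]
        refine ⟨N, fun n hn => ?_⟩
        have h5 : (ar : ℝ) < γ n := by
          have : (N : ℝ) ≤ (n : ℝ) := by exact_mod_cast hn
          have := h3 n
          have := le_max_right (γ' (M0 + 1)) (n : ℝ)
          linarith
        rw [← har]
        show ((ar : ℝ) : WithTop ℝ) < ((γ n : ℝ) : WithTop ℝ)
        exact_mod_cast h5
      · intro b hb
        rw [hδtop] at hb
        exact absurd hb (not_top_lt)
    · obtain ⟨γ, h1, h2, h3, h4⟩ := exists_seq hnd
        (fun n => max (γ' (M0 + 1)) (r - 1 / (n + 1))) (fun _ => r) monotone_const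
        (fun n => by
          apply max_lt
          · have h5 := hγ'hi (M0 + 1)
            have h6 : (δ' : ℝ) < r := by
              rw [hδr] at hδ'
              exact_mod_cast hδ'
            linarith
          · have : (0:ℝ) < 1 / ((n : ℝ) + 1) := by positivity
            linarith)
      refine ⟨γ, h1, h2, fun n => lt_of_le_of_lt (le_max_left _ _) (h3 n), ?_, ?_⟩
      · intro a ha
        rw [hδr] at ha
        obtain ⟨ar, har⟩ := WithTop.ne_top_iff_exists.mp (ne_top_of_lt ha)
        rw [← har] at ha
        have har' : ar < r := by exact_mod_cast ha
        obtain ⟨N, hN⟩ := exists_nat_one_div_lt (K := ℝ) (by linarith : (0:ℝ) < r - ar)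
        rw [Filter.eventually_atTop]
        refine ⟨N, fun n hn => ?_⟩
        have hmono1 : 1 / ((n : ℝ) + 1) ≤ 1 / ((N : ℝ) + 1) := by
          apply one_div_le_one_div_of_le
          · positivity
          · have : (N : ℝ) ≤ (n : ℝ) := by exact_mod_cast hn
            linarith
        have h5 : ar < γ n := by
          have := h3 n
          have := le_max_right (γ' (M0 + 1)) (r - 1 / ((n : ℝ) + 1))
          linarith
        rw [← har]
        show ((ar : ℝ) : WithTop ℝ) < ((γ n : ℝ) : WithTop ℝ)
        exact_mod_cast h5
      · intro b hb
        rw [hδr] at hb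
        apply Filter.Eventually.of_forall
        intro n
        show ((γ n : ℝ) : WithTop ℝ) < b
        have h6 : ((γ n : ℝ) : WithTop ℝ) < ((r : ℝ) : WithTop ℝ) := by exact_mod_cast h4 n
        exact lt_trans h6 hb
  choose x hx using fun n => (hγS n : ∃ y : K, v y = ((γ n : ℝ) : WithTop ℝ))
  -- the two breadth-δ rings
  have hdiff : ∀ (e : K) (n : ℕ), ((e + x (n + 1)) - (e + x n)) = x (n + 1) - x n :=
    fun e n => by ring
  have hPCW : ∀ e : K, IsPC v (fun n => e + x n) := by
    intro e n
    have h1 : v ((e + x (n + 1)) - (e + x n)) = ((γ n : ℝ) : WithTop ℝ) := by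
      rw [hdiff, val_seq_diff v hx hγmono (Nat.lt_succ_self n)]
    have h2 : v ((e + x (n + 2)) - (e + x (n + 1))) = ((γ (n + 1) : ℝ) : WithTop ℝ) := by
      rw [hdiff, val_seq_diff v hx hγmono (Nat.lt_succ_self (n + 1))]
    rw [h1, h2]
    exact_mod_cast hγmono (Nat.lt_succ_self n)
  have hBrW : ∀ e : K, IsBreadth v (fun n => e + x n) δ := by
    intro e
    have heq : (fun n => v ((fun n => e + x n) (n + 1) - (fun n => e + x n) n)) =
        fun n => ((γ n : ℝ) : WithTop ℝ) := by
      funext n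
      simp only []
      rw [hdiff, val_seq_diff v hx hγmono (Nat.lt_succ_self n)]
    rw [IsBreadth, heq]
    exact hγbr
  set e₁ : K := x' M0 with he₁
  set e₂ : K := x' (M0 + 1) with he₂
  set W₁ : ValuationSubring (RatFunc K) := VERing v e₁ x γ hx hγmono with hW₁def
  set W₂ : ValuationSubring (RatFunc K) := VERing v e₂ x γ hx hγmono with hW₂def
  have hW₁VV : W₁ ∈ VV v := ⟨fun n => e₁ + x n, hPCW e₁, rfl⟩
  have hW₂VV : W₂ ∈ VV v := ⟨fun n => e₂ + x n, hPCW e₂, rfl⟩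
  have hW₁δ : W₁ ∈ VVδ v δ := ⟨fun n => e₁ + x n, hPCW e₁, hBrW e₁, rfl⟩
  have hW₂δ : W₂ ∈ VVδ v δ := ⟨fun n => e₂ + x n, hPCW e₂, hBrW e₂, rfl⟩
  -- W₁ and W₂ belong to every generator through U
  have hmemW : ∀ (e : K) (Me : ℕ), Me ≥ M0 → Me ≤ M0 + 1 →
      v e = ((γ' Me : ℝ) : WithTop ℝ) →
      ∀ t ∈ T, (VERing v e x γ hx hγmono : ValuationSubring (RatFunc K)) ∈ t := by
    intro e Me hMe hMe1 he t ht
    rw [hψ t ht]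
    show ψ t ∈ VERing v e x γ hx hγmono
    rw [VERing_mem]
    apply Filter.Eventually.of_forall
    intro n
    apply hM0 Me hMe t ht e (x n) he
    rw [hx n]
    have h5 : γ' Me < γ n :=
      lt_of_le_of_lt (hγ'mono.monotone hMe1) (hγlo n)
    exact_mod_cast h5
  have hW₁O : W₁ ∈ O := hTO (Set.mem_sInter.mpr
    (fun t ht => hmemW e₁ M0 le_rfl (Nat.le_succ M0) (hx' M0) t ht))
  have hW₂O : W₂ ∈ O := hTO (Set.mem_sInter.mpr
    (fun t ht => hmemW e₂ (M0 + 1) (Nat.le_succ M0) le_rfl (hx' (M0 + 1)) t ht))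
  set W₁' : ↥(VV v) := ⟨W₁, hW₁VV⟩ with hW₁'def
  set W₂' : ↥(VV v) := ⟨W₂, hW₂VV⟩ with hW₂'def
  have hd1 : d U' W₁' < ε0 / 2 := by
    have hB : W₁' ∈ Bε := by rw [← hOB]; exact hW₁O
    exact hB
  have hd2 : d U' W₂' < ε0 / 2 := by
    have hB : W₂' ∈ Bε := by rw [← hOB]; exact hW₂O
    exact hB
  -- the d_δ distance between W₁ and W₂
  have hediff : ∀ n : ℕ, (e₁ + x n) - (e₂ + x n) = -(x' (M0 + 1) - x' M0) := by
    intro n; rw [he₁, he₂]; ring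
  have hvdiff : ∀ n : ℕ, v ((e₁ + x n) - (e₂ + x n)) = ((γ' M0 : ℝ) : WithTop ℝ) := by
    intro n
    rw [hediff n, v.map_neg, val_seq_diff v hx' hγ'mono (Nat.lt_succ_self M0)]
  set c₁ : ℝ := Real.exp (-(γ' M0)) - expNeg δ with hc₁def
  have hc₁gt : ε0 < c₁ := by
    have h6 := hγ'hi M0
    have h7 : Real.exp (-δ') < Real.exp (-(γ' M0)) := Real.exp_lt_exp.mpr (by linarith)
    rw [hε0def, hc₁def]; linarith
  have hfun : (fun n => max (dK v ((fun n => e₁ + x n) n) ((fun n => e₂ + x n) n) - expNeg δ) 0)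
      = fun _ => c₁ := by
    funext n
    have hdk : dK v (e₁ + x n) (e₂ + x n) = Real.exp (-(γ' M0)) := by
      rw [dK, hvdiff n]
      rfl
    simp only []
    rw [hdk]
    exact max_eq_left (by linarith)
  have htend := hdd δ W₁ W₂ (fun n => e₁ + x n) (fun n => e₂ + x n)
    (hPCW e₁) (hBrW e₁) rfl (hPCW e₂) (hBrW e₂) rfl
  rw [hfun] at htend
  have hddval : dd δ W₁ W₂ = c₁ := tendsto_nhds_unique htend tendsto_const_nhds
  have hHeq : d W₁' W₂' = c₁ := by
    have hH := H W₁' W₂' hW₁δ hW₂δ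
    rw [hH]
    exact hddval
  have htr := htri W₁' U' W₂'
  rw [hsymm W₁' U', hHeq] at htr
  linarith


end PaperPCZar
end
end

section
/- Let β ∈ K̄ and let u be an extension of v to the algebraic closure K̄. Then the set 𝒱(β,•) = {V_E ∈ 𝒱 : β is a pseudo-limit of E with respect to u} is closed in 𝒱 with respect to the Zariski topology. -/
open Filter Topology TopologicalSpace Set Polynomial

noncomputable section

namespace PaperPCZar

variable {K : Type*} [Field K]

section Aux

/-- For an additive valuation, `v (x - y) = min (v x) (v y)` when the values differ. -/
theorem addval_sub_of_distinct {R Γ : Type*} [Ring R] [LinearOrderedAddCommGroupWithTop Γ]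
    (w : AddValuation R Γ) {x y : R} (h : w x ≠ w y) : w (x - y) = min (w x) (w y) := by
  rw [sub_eq_add_neg, w.map_add_of_distinct_val (by rwa [w.map_neg]), w.map_neg]

end Aux

/-- For `β ∈ K̄` and an extension `u` of `v` to the algebraic closure,
the set `𝒱(β,•)` is closed in `𝒱` with respect to the Zariski topology. -/
theorem statement8 (v : AddValuation K (WithTop ℝ)) (hv : IsRankOne v)
    (u : AddValuation (AlgebraicClosure K) (WithTop ℝ))
    (hu : ∀ x : K, u (algebraMap K (AlgebraicClosure K) x) = v x)
    (β : AlgebraicClosure K) :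
    @IsClosed _ (zarSub (VV v))
      {W : ↥(VV v) | (W : ValuationSubring (RatFunc K)) ∈ VVβ v u β} := by
  classical
  letI : TopologicalSpace ↥(VV v) := zarSub (VV v)
  rw [← isOpen_compl_iff, isOpen_iff_forall_mem_open]
  rintro W hW
  have hWn : ¬ ((W : ValuationSubring (RatFunc K)) ∈ VVβ v u β) := hW
  obtain ⟨s, hpc, hset⟩ := W.2
  set σ := algebraMap K (AlgebraicClosure K) with hσ
  have husub : ∀ x y : K, u (σ x - σ y) = v (x - y) := by
    intro x y; rw [← _root_.map_sub σ, hu]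
  -- strict monotonicity of the gauges
  have hγmono : StrictMono (fun n => v (s (n + 1) - s n)) :=
    strictMono_nat_of_lt_succ hpc
  -- β is not a pseudo-limit of s
  have hnl : ¬ IsPCLimitAC u s β := fun h => hWn ⟨s, hpc, h, hset⟩
  obtain ⟨n₀, h0⟩ := not_forall.mp hnl
  replace h0 : u (β - σ (s (n₀ + 1))) ≤ u (β - σ (s n₀)) := not_lt.mp h0
  set N := n₀ + 1 with hN
  set γstar := u (β - σ (s N)) with hγstar
  -- step 1 : γstar ≤ γ n₀
  have h1 : γstar ≤ v (s (n₀ + 1) - s n₀) := by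
    by_contra h
    push_neg at h
    have hdval : u (σ (s N) - σ (s n₀)) = v (s (n₀ + 1) - s n₀) := by
      rw [husub]
    have e : β - σ (s n₀) = (β - σ (s N)) + (σ (s N) - σ (s n₀)) := by ring
    have : u (β - σ (s n₀)) = u (σ (s N) - σ (s n₀)) := by
      rw [e]
      exact u.map_add_eq_of_lt_right (by rw [hdval]; exact h)
    rw [this, hdval] at h0
    exact absurd (lt_of_le_of_lt h0 h) (lt_irrefl _)
  -- step 2 : the values u (β - σ (s (N+m))) are constant
  have hconst : ∀ m, u (β - σ (s (N + m))) = γstar := by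
    intro m
    induction m with
    | zero => rfl
    | succ m ih =>
      have e : β - σ (s (N + m + 1)) =
          (β - σ (s (N + m))) - (σ (s (N + m + 1)) - σ (s (N + m))) := by ring
      have hlt : u (β - σ (s (N + m))) < u (σ (s (N + m + 1)) - σ (s (N + m))) := by
        rw [ih, husub]
        exact lt_of_le_of_lt h1 (hγmono (show n₀ < N + m by omega))
      have : u (β - σ (s (N + m + 1))) = u (β - σ (s (N + m))) := by
        rw [e]; exact u.map_sub_eq_of_lt_left hlt
      show u (β - σ (s (N + m + 1))) = γstar
      rw [this, ih]
  -- the gauge at N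
  set c := s (N + 1) - s N with hc
  have hvcne : v c ≠ ⊤ := ne_top_of_lt (hpc N)
  obtain ⟨g, hg⟩ := WithTop.ne_top_iff_exists.mp hvcne
  have hc0 : c ≠ 0 := by
    intro h
    rw [h, v.map_zero] at hg
    exact WithTop.coe_ne_top hg
  have hγstar_lt : γstar < (g : WithTop ℝ) := by
    rw [hg]
    exact lt_of_le_of_lt h1 (hγmono (Nat.lt_succ_self n₀))
  -- the separating rational function
  set φ : RatFunc K := algebraMap (Polynomial K) (RatFunc K)
    (Polynomial.C c⁻¹ * (Polynomial.X - Polynomial.C (s N))) with hφ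
  have heval : ∀ x : K, RatFunc.eval (RingHom.id K) x φ = c⁻¹ * (x - s N) := by
    intro x
    rw [hφ, RatFunc.eval_algebraMap]
    simp
  have hvcinv : v c⁻¹ = ((-g : ℝ) : WithTop ℝ) := by
    rw [v.map_inv, ← hg, WithTop.LinearOrderedAddCommGroup.coe_neg]
  have hvφ : ∀ x : K, v (RatFunc.eval (RingHom.id K) x φ) =
      ((-g : ℝ) : WithTop ℝ) + v (x - s N) := by
    intro x
    rw [heval, v.map_mul, hvcinv]
  -- distances from s N
  have hdist : ∀ m, v (s (N + 1 + m) - s N) = v c := by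
    intro m
    induction m with
    | zero => rfl
    | succ m ih =>
      have e : s (N + 1 + m + 1) - s N =
          (s (N + 1 + m + 1) - s (N + 1 + m)) + (s (N + 1 + m) - s N) := by ring
      have hlt : v (s (N + 1 + m) - s N) < v (s (N + 1 + m + 1) - s (N + 1 + m)) := by
        rw [ih, hc]
        exact hγmono (show N < N + 1 + m by omega)
      show v (s (N + 1 + m + 1) - s N) = v c
      rw [e, v.map_add_eq_of_lt_right hlt]
      exact ih
  -- φ belongs to W
  have hφW : φ ∈ (W : ValuationSubring (RatFunc K)) := by
    have : φ ∈ ((W : ValuationSubring (RatFunc K)) : Set (RatFunc K)) := by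
      rw [hset]
      refine eventually_atTop.mpr ⟨N + 1, fun n hn => ?_⟩
      obtain ⟨m, rfl⟩ : ∃ m, n = N + 1 + m := ⟨n - (N + 1), by omega⟩
      rw [hvφ, hdist m, ← hg, ← WithTop.coe_add]
      norm_num
    exact this
  -- the open set
  refine ⟨Subtype.val ⁻¹' {V : ValuationSubring (RatFunc K) | φ ∈ V}, ?_, ?_, hφW⟩
  · -- it is contained in the complement
    rintro ⟨W', hW'VV⟩ hφW'
    intro hW'β
    obtain ⟨t, hpc', hlim', hset'⟩ := hW'β
    have hφt : φ ∈ VESet v t := by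
      rw [← hset']
      exact hφW'
    -- pseudo-limit values along t
    have hbmono : StrictMono (fun n => u (β - σ (t n))) :=
      strictMono_nat_of_lt_succ hlim'
    -- eventually u (β - σ (t n)) ≠ γstar
    have hM : ∃ M, ∀ n ≥ M, u (β - σ (t n)) ≠ γstar := by
      by_cases hex : ∃ n₁, u (β - σ (t n₁)) = γstar
      · obtain ⟨n₁, hn₁⟩ := hex
        refine ⟨n₁ + 1, fun n hn => ?_⟩
        have h2 : u (β - σ (t n₁)) < u (β - σ (t n)) := hbmono (show n₁ < n by omega)
        rw [hn₁] at h2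
        exact ne_of_gt h2
      · push_neg at hex
        exact ⟨0, fun n _ => hex n⟩
    obtain ⟨M, hM⟩ := hM
    have hsmall : ∀ n ≥ M, v (t n - s N) ≤ γstar := by
      intro n hn
      have e : σ (t n) - σ (s N) = (β - σ (s N)) - (β - σ (t n)) := by ring
      have : v (t n - s N) = min γstar (u (β - σ (t n))) := by
        rw [← husub, e]
        exact addval_sub_of_distinct u (Ne.symm (hM n hn))
      rw [this]
      exact min_le_left _ _
    have hneg : ∀ n ≥ M, v (RatFunc.eval (RingHom.id K) (t n) φ) < 0 := by
      intro n hn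
      rw [hvφ]
      have hlt : v (t n - s N) < (g : WithTop ℝ) :=
        lt_of_le_of_lt (hsmall n hn) hγstar_lt
      obtain ⟨r, hr⟩ := WithTop.ne_top_iff_exists.mp (ne_top_of_lt hlt)
      rw [← hr]
      rw [← WithTop.coe_add]
      rw [show ((0 : WithTop ℝ)) = ((0 : ℝ) : WithTop ℝ) from rfl, WithTop.coe_lt_coe]
      have : (r : WithTop ℝ) < (g : WithTop ℝ) := hr ▸ hlt
      have hrg : r < g := WithTop.coe_lt_coe.mp this
      linarith
    have := (hφt.and (eventually_atTop.mpr ⟨M, fun n hn => hn⟩)).exists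
    obtain ⟨n, hn0, hnM⟩ := this
    exact absurd hn0 (not_le.mpr (hneg n hnM))
  · -- it is open
    exact @isOpen_induced _ _ (zarTop (RatFunc K)) Subtype.val _
      (isOpen_generateFrom_of_mem ⟨φ, rfl⟩)

end PaperPCZar
end
end

section
/- Let a < b in ℝ∪{±∞} and let Λ be a subset of (a,b] that is dense in (a,b] with respect to the Euclidean topology. Then the following are equivalent for the space (a,b]_Λ (the interval (a,b] with the Λ-upper limit topology): (i) Λ is countable; (ii) (a,b]_Λ is second-countable; (iii) (a,b]_Λ is metrizable; (iv) the topology of (a,b]_Λ is induced by an ultrametric. -/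
open Filter Topology TopologicalSpace Set Polynomial

noncomputable section

namespace PaperPCZar

variable {K : Type*} [Field K]

section Statement12Aux

variable {a b : EReal} {Λ : Set ℝ}

/-- The generating family of `upperTopE`. -/
def genSet (a b : EReal) (Λ : Set ℝ) : Set (Set {x : EReal // a < x ∧ x ≤ b}) :=
  {U | ∃ α lam : EReal, (a < α ∧ α ≤ b) ∧
    (lam = ⊤ ∨ ∃ r ∈ Λ, lam = (r : EReal)) ∧
    U = {x : {x : EReal // a < x ∧ x ≤ b} | α < (x : EReal) ∧ (x : EReal) ≤ lam}}

theorem upperTopE_def (a b : EReal) (Λ : Set ℝ) :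
    upperTopE a b Λ = generateFrom (genSet a b Λ) := rfl

/-- The countable subbasis. -/
def subBase (a b : EReal) (Λ : Set ℝ) : Set (Set {x : EReal // a < x ∧ x ≤ b}) :=
  {U | ∃ l ∈ Λ, U = {x : {x : EReal // a < x ∧ x ≤ b} | (x : EReal) ≤ (l : EReal)}} ∪
  {U | ∃ l ∈ Λ, U = {x : {x : EReal // a < x ∧ x ≤ b} | (l : EReal) < (x : EReal)}}

theorem aux_btwn (hΛdense : ∀ x : EReal, a < x → x ≤ b →
      x ∈ closure ((fun r : ℝ => (r : EReal)) '' Λ))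
    {x y : EReal} (hax : a < x) (hxy : x < y) (hyb : y ≤ b) :
    ∃ l ∈ Λ, x < (l : EReal) ∧ (l : EReal) < y := by
  obtain ⟨m, hm1, hm2⟩ := exists_between hxy
  have hm := hΛdense m (hax.trans hm1) (hm2.le.trans hyb)
  rw [mem_closure_iff] at hm
  obtain ⟨z, hzo, hzs⟩ := hm (Set.Ioo x y) isOpen_Ioo ⟨hm1, hm2⟩
  obtain ⟨l, hl, rfl⟩ := hzs
  exact ⟨l, hl, hzo.1, hzo.2⟩

theorem isOpen_le (hΛmem : ∀ r ∈ Λ, a < (r : EReal) ∧ (r : EReal) ≤ b) {l : ℝ} (hl : l ∈ Λ) :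
    IsOpen[upperTopE a b Λ]
      {x : {x : EReal // a < x ∧ x ≤ b} | (x : EReal) ≤ (l : EReal)} := by
  letI := upperTopE a b Λ
  rw [isOpen_iff_forall_mem_open]
  intro x hx
  obtain ⟨α, hα1, hα2⟩ := exists_between x.2.1
  refine ⟨{y : {x : EReal // a < x ∧ x ≤ b} | α < (y : EReal) ∧ (y : EReal) ≤ (l : EReal)},
    fun y hy => hy.2, ?_, ⟨hα2, hx⟩⟩
  exact .basic _ ⟨α, (l : EReal), ⟨hα1, (hα2.trans_le x.2.2).le⟩, Or.inr ⟨l, hl, rfl⟩, rfl⟩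

theorem isOpen_gt (hΛmem : ∀ r ∈ Λ, a < (r : EReal) ∧ (r : EReal) ≤ b) {l : ℝ} (hl : l ∈ Λ) :
    IsOpen[upperTopE a b Λ]
      {x : {x : EReal // a < x ∧ x ≤ b} | (l : EReal) < (x : EReal)} := by
  have h : {x : {x : EReal // a < x ∧ x ≤ b} | (l : EReal) < (x : EReal)} =
      {x : {x : EReal // a < x ∧ x ≤ b} | (l : EReal) < (x : EReal) ∧ (x : EReal) ≤ (⊤ : EReal)} := by
    ext x; simp [le_top]
  rw [h]
  exact .basic _ ⟨(l : EReal), ⊤, hΛmem l hl, Or.inl rfl, rfl⟩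

theorem subBase_isOpen (hΛmem : ∀ r ∈ Λ, a < (r : EReal) ∧ (r : EReal) ≤ b)
    {U : Set {x : EReal // a < x ∧ x ≤ b}} (hU : U ∈ subBase a b Λ) :
    IsOpen[upperTopE a b Λ] U := by
  rcases hU with ⟨l, hl, rfl⟩ | ⟨l, hl, rfl⟩
  exacts [isOpen_le hΛmem hl, isOpen_gt hΛmem hl]

theorem upperTopE_eq (hΛmem : ∀ r ∈ Λ, a < (r : EReal) ∧ (r : EReal) ≤ b)
    (hΛdense : ∀ x : EReal, a < x → x ≤ b →
      x ∈ closure ((fun r : ℝ => (r : EReal)) '' Λ)) :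
    upperTopE a b Λ = generateFrom (subBase a b Λ) := by
  apply le_antisymm
  · exact le_generateFrom fun U hU => subBase_isOpen hΛmem hU
  · rw [upperTopE_def]
    apply le_generateFrom
    rintro U ⟨α, lam, ⟨haα, hαb⟩, hlam, rfl⟩
    letI := generateFrom (subBase a b Λ)
    rw [isOpen_iff_forall_mem_open]
    rintro x ⟨hx1, hx2⟩
    obtain ⟨l1, hl1, hαl1, hl1x⟩ := aux_btwn hΛdense haα hx1 x.2.2
    rcases hlam with rfl | ⟨l, hlΛ, rfl⟩
    · refine ⟨{y : {x : EReal // a < x ∧ x ≤ b} | (l1 : EReal) < (y : EReal)},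
        fun y hy => ⟨hαl1.trans hy, le_top⟩, .basic _ (Or.inr ⟨l1, hl1, rfl⟩), hl1x⟩
    · refine ⟨{y : {x : EReal // a < x ∧ x ≤ b} | (l1 : EReal) < (y : EReal)} ∩
        {y : {x : EReal // a < x ∧ x ≤ b} | (y : EReal) ≤ (l : EReal)},
        fun y hy => ⟨hαl1.trans hy.1, hy.2⟩,
        IsOpen.inter (.basic _ (Or.inr ⟨l1, hl1, rfl⟩)) (.basic _ (Or.inl ⟨l, hlΛ, rfl⟩)),
        hl1x, hx2⟩


theorem subBase_countable (hc : Λ.Countable) : (subBase a b Λ).Countable := by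
  apply Set.Countable.union
  · have : {U | ∃ l ∈ Λ, U = {x : {x : EReal // a < x ∧ x ≤ b} | (x : EReal) ≤ (l : EReal)}} =
        (fun l : ℝ => {x : {x : EReal // a < x ∧ x ≤ b} | (x : EReal) ≤ (l : EReal)}) '' Λ := by
      ext U; simp [Set.mem_image, eq_comm]
    rw [this]; exact hc.image _
  · have : {U | ∃ l ∈ Λ, U = {x : {x : EReal // a < x ∧ x ≤ b} | (l : EReal) < (x : EReal)}} =
        (fun l : ℝ => {x : {x : EReal // a < x ∧ x ≤ b} | (l : EReal) < (x : EReal)}) '' Λ := by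
      ext U; simp [Set.mem_image, eq_comm]
    rw [this]; exact hc.image _

theorem secondCountable_of_countable (hΛmem : ∀ r ∈ Λ, a < (r : EReal) ∧ (r : EReal) ≤ b)
    (hΛdense : ∀ x : EReal, a < x → x ≤ b →
      x ∈ closure ((fun r : ℝ => (r : EReal)) '' Λ)) (hc : Λ.Countable) :
    @SecondCountableTopology {x : EReal // a < x ∧ x ≤ b} (upperTopE a b Λ) := by
  letI := upperTopE a b Λ
  exact ⟨⟨subBase a b Λ, subBase_countable hc, upperTopE_eq hΛmem hΛdense⟩⟩

theorem countable_of_secondCountable (hΛmem : ∀ r ∈ Λ, a < (r : EReal) ∧ (r : EReal) ≤ b)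
    (h2 : @SecondCountableTopology {x : EReal // a < x ∧ x ≤ b} (upperTopE a b Λ)) :
    Λ.Countable := by
  letI := upperTopE a b Λ
  haveI := h2
  obtain ⟨B, hBc, -, hB⟩ := exists_countable_basis {x : EReal // a < x ∧ x ≤ b}
  haveI : Countable ↥B := hBc.to_subtype
  have key : ∀ l : ↥Λ, ∃ V ∈ B,
      (⟨((l : ℝ) : EReal), (hΛmem l l.2).1, (hΛmem l l.2).2⟩ :
        {x : EReal // a < x ∧ x ≤ b}) ∈ V ∧
      V ⊆ {x : {x : EReal // a < x ∧ x ≤ b} | (x : EReal) ≤ ((l : ℝ) : EReal)} := by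
    intro l
    exact hB.exists_subset_of_mem_open (show ((⟨((l : ℝ) : EReal), (hΛmem l l.2).1, (hΛmem l l.2).2⟩ : {x : EReal // a < x ∧ x ≤ b}) : EReal) ≤ ((l:ℝ):EReal) from le_rfl) (isOpen_le hΛmem l.2)
  choose f hf1 hf2 hf3 using key
  have hinj : Function.Injective fun l : ↥Λ => (⟨f l, hf1 l⟩ : ↥B) := by
    intro l1 l2 h
    have h' : f l1 = f l2 := congrArg Subtype.val h
    have h12 : ((l2 : ℝ) : EReal) ≤ ((l1 : ℝ) : EReal) := hf3 l1 (h' ▸ hf2 l2)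
    have h21 : ((l1 : ℝ) : EReal) ≤ ((l2 : ℝ) : EReal) := hf3 l2 (h'.symm ▸ hf2 l1)
    have : (l1 : ℝ) = (l2 : ℝ) := by exact_mod_cast le_antisymm h21 h12
    exact Subtype.ext this
  have : Countable ↥Λ := hinj.countable
  exact Set.countable_coe_iff.mpr this

theorem countable_of_metrizable (hΛmem : ∀ r ∈ Λ, a < (r : EReal) ∧ (r : EReal) ≤ b)
    (h : IsMetrizable (upperTopE a b Λ)) : Λ.Countable := by
  classical
  obtain ⟨d, hsymm, hzero, htri, heq⟩ := h
  -- nonnegativity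
  have hnonneg : ∀ x y, 0 ≤ d x y := by
    intro x y
    have h1 : d x x = 0 := (hzero x x).mpr rfl
    have h2 := htri x y x
    rw [hsymm y x] at h2
    linarith
  -- every point of an open set has a ball neighborhood inside
  have hnbhd : ∀ U, IsOpen[upperTopE a b Λ] U →
      ∀ x ∈ U, ∃ ε : ℝ, 0 < ε ∧ {y | d x y < ε} ⊆ U := by
    intro U hU
    rw [heq] at hU
    induction hU with
    | basic V hV =>
      obtain ⟨c, η, hη, rfl⟩ := hV
      intro x hx
      refine ⟨η - d c x, by simpa using hx, fun y hy => ?_⟩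
      have := htri c x y
      simp only [Set.mem_setOf_eq] at hy ⊢
      linarith
    | univ => exact fun x _ => ⟨1, one_pos, fun y _ => trivial⟩
    | inter U V hU hV ihU ihV =>
      intro x hx
      obtain ⟨ε1, hε1, hs1⟩ := ihU x hx.1
      obtain ⟨ε2, hε2, hs2⟩ := ihV x hx.2
      refine ⟨min ε1 ε2, lt_min hε1 hε2, fun y hy => ?_⟩
      have hy' : d x y < min ε1 ε2 := hy
      exact ⟨hs1 (show d x y < ε1 from lt_of_lt_of_le hy' (min_le_left _ _)),
        hs2 (show d x y < ε2 from lt_of_lt_of_le hy' (min_le_right _ _))⟩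
    | sUnion S hS ih =>
      intro x hx
      obtain ⟨V, hV, hxV⟩ := hx
      obtain ⟨ε, hε, hs⟩ := ih V hV x hxV
      exact ⟨ε, hε, fun y hy => ⟨V, hV, hs hy⟩⟩
  -- every open set around a point contains a left interval
  have hint : ∀ U, IsOpen[upperTopE a b Λ] U →
      ∀ x ∈ U, ∃ α : EReal, a ≤ α ∧ α < (x : EReal) ∧
        ∀ y : {x : EReal // a < x ∧ x ≤ b}, α < (y : EReal) → (y : EReal) ≤ (x : EReal) → y ∈ U := by
    intro U hU
    have hU' : TopologicalSpace.GenerateOpen (genSet a b Λ) U := hU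
    clear hU
    induction hU' with
    | basic V hV =>
      obtain ⟨α, lam, ⟨h1, h2⟩, hlam, rfl⟩ := hV
      intro x hx
      exact ⟨α, h1.le, hx.1, fun y hy1 hy2 => ⟨hy1, hy2.trans hx.2⟩⟩
    | univ => exact fun x _ => ⟨a, le_rfl, x.2.1, fun y _ _ => trivial⟩
    | inter U V hUo hVo ihU ihV =>
      intro x hx
      obtain ⟨α1, ha1, hx1, hs1⟩ := ihU x hx.1
      obtain ⟨α2, ha2, hx2, hs2⟩ := ihV x hx.2
      exact ⟨max α1 α2, le_max_of_le_left ha1, max_lt hx1 hx2,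
        fun y hy1 hy2 => ⟨hs1 y (lt_of_le_of_lt (le_max_left _ _) hy1) hy2,
          hs2 y (lt_of_le_of_lt (le_max_right _ _) hy1) hy2⟩⟩
    | sUnion S hS ih =>
      intro x hx
      obtain ⟨V, hV, hxV⟩ := hx
      obtain ⟨α, ha, hx', hs⟩ := ih V hV x hxV
      exact ⟨α, ha, hx', fun y hy1 hy2 => ⟨V, hV, hs y hy1 hy2⟩⟩
  -- rational points are dense
  have hdense : ∀ U, IsOpen[upperTopE a b Λ] U → ∀ x ∈ U,
      ∃ z : {x : EReal // a < x ∧ x ≤ b}, z ∈ U ∧ ∃ q : ℚ, (z : EReal) = ((q : ℝ) : EReal) := by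
    intro U hU x hx
    obtain ⟨α, haα, hαx, hsub⟩ := hint U hU x hx
    obtain ⟨q, hq1, hq2⟩ := EReal.exists_rat_btwn_of_lt hαx
    exact ⟨⟨((q : ℝ) : EReal), lt_of_le_of_lt haα hq1, hq2.le.trans x.2.2⟩,
      hsub _ hq1 hq2.le, q, rfl⟩
  -- balls are open
  have hball_open : ∀ (c : {x : EReal // a < x ∧ x ≤ b}) (ε : ℝ), 0 < ε →
      IsOpen[upperTopE a b Λ] {y | d c y < ε} := by
    intro c ε hε
    rw [heq]
    exact .basic _ ⟨c, ε, hε, rfl⟩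
  -- for each l ∈ Λ, pick a rational center and rational radius
  have key : ∀ l : ↥Λ, ∃ p : ℚ × ℚ, ∃ z : {x : EReal // a < x ∧ x ≤ b},
      (z : EReal) = ((p.1 : ℝ) : EReal) ∧
      d z (⟨((l : ℝ) : EReal), (hΛmem l l.2).1, (hΛmem l l.2).2⟩ :
        {x : EReal // a < x ∧ x ≤ b}) < (p.2 : ℝ) ∧
      ∀ y, d z y < (p.2 : ℝ) → (y : EReal) ≤ ((l : ℝ) : EReal) := by
    intro l
    set xl : {x : EReal // a < x ∧ x ≤ b} :=
      ⟨((l : ℝ) : EReal), (hΛmem l l.2).1, (hΛmem l l.2).2⟩ with hxl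
    have hUopen := isOpen_le hΛmem l.2
    have hmem : xl ∈ {x : {x : EReal // a < x ∧ x ≤ b} | (x : EReal) ≤ ((l : ℝ) : EReal)} := by
      simp only [Set.mem_setOf_eq, hxl]; exact le_rfl
    obtain ⟨ε, hε, hsub⟩ := hnbhd _ hUopen xl hmem
    have hball2 := hball_open xl (ε / 2) (half_pos hε)
    have hxball : xl ∈ {y | d xl y < ε / 2} := by
      simp only [Set.mem_setOf_eq, (hzero xl xl).mpr rfl]
      linarith
    obtain ⟨z, hz, q, hq⟩ := hdense _ hball2 xl hxball
    have hdzx : d z xl < ε / 2 := by rw [hsymm]; exact hz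
    obtain ⟨r, hr1, hr2⟩ := exists_rat_btwn hdzx
    refine ⟨(q, r), z, hq, hr1, fun y hy => ?_⟩
    have h1 : d xl y ≤ d xl z + d z y := htri xl z y
    have h2 : d xl z < ε / 2 := hz
    have : d xl y < ε := by linarith
    exact hsub this
  choose p z hz hdlt hball using key
  have hinj : Function.Injective p := by
    intro l1 l2 h
    have hzz : z l1 = z l2 := by
      apply Subtype.ext
      rw [hz l1, hz l2, h]
    have h12 : ((l2 : ℝ) : EReal) ≤ ((l1 : ℝ) : EReal) :=
      hball l1 ⟨((l2 : ℝ) : EReal), (hΛmem l2 l2.2).1, (hΛmem l2 l2.2).2⟩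
        (by rw [hzz, h]; exact hdlt l2)
    have h21 : ((l1 : ℝ) : EReal) ≤ ((l2 : ℝ) : EReal) :=
      hball l2 ⟨((l1 : ℝ) : EReal), (hΛmem l1 l1.2).1, (hΛmem l1 l1.2).2⟩
        (by rw [← hzz, ← h]; exact hdlt l1)
    have : (l1 : ℝ) = (l2 : ℝ) := by exact_mod_cast le_antisymm h21 h12
    exact Subtype.ext this
  exact Set.countable_coe_iff.mpr hinj.countable

theorem ultra_of_countable (hab : a < b)
    (hΛmem : ∀ r ∈ Λ, a < (r : EReal) ∧ (r : EReal) ≤ b)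
    (hΛdense : ∀ x : EReal, a < x → x ≤ b →
      x ∈ closure ((fun r : ℝ => (r : EReal)) '' Λ))
    (hc : Λ.Countable) : IsUltrametrizable (upperTopE a b Λ) := by
  classical
  -- Λ is nonempty
  have hΛne : Λ.Nonempty := by
    have hbmem := hΛdense b hab le_rfl
    by_contra h
    rw [Set.not_nonempty_iff_eq_empty] at h
    simp [h] at hbmem
  obtain ⟨e, he⟩ := hc.exists_eq_range hΛne
  -- the disagreement set
  set X := {x : EReal // a < x ∧ x ≤ b} with hX
  let P : X → X → ℕ → Prop := fun x y n =>
    ((x : EReal) ≤ ((e n : ℝ) : EReal) ↔ (y : EReal) ≤ ((e n : ℝ) : EReal))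
  let DS : X → X → Set ℕ := fun x y => {n | ¬ P x y n}
  let d : X → X → ℝ := fun x y => if (DS x y).Nonempty then (2⁻¹ : ℝ) ^ sInf (DS x y) else 0
  have heΛ : ∀ n, e n ∈ Λ := fun n => he ▸ Set.mem_range_self n
  -- separation
  have hsep : ∀ x y : X, x ≠ y → (DS x y).Nonempty := by
    intro x y hxy
    have hne : (x : EReal) ≠ (y : EReal) := fun h => hxy (Subtype.ext h)
    rcases hne.lt_or_gt with h | h
    · obtain ⟨l, hl, h1, h2⟩ := aux_btwn hΛdense x.2.1 h y.2.2
      obtain ⟨n, rfl⟩ : ∃ n, e n = l := by rw [he] at hl; exact hl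
      exact ⟨n, fun hP => absurd (hP.mp h1.le) (not_le.mpr h2)⟩
    · obtain ⟨l, hl, h1, h2⟩ := aux_btwn hΛdense y.2.1 h x.2.2
      obtain ⟨n, rfl⟩ : ∃ n, e n = l := by rw [he] at hl; exact hl
      exact ⟨n, fun hP => absurd (hP.mpr h1.le) (not_le.mpr h2)⟩
  have hDS_symm : ∀ x y, DS x y = DS y x := by
    intro x y
    ext n
    exact ⟨fun h hh => h hh.symm, fun h hh => h hh.symm⟩
  have hd_symm : ∀ x y, d x y = d y x := by
    intro x y; simp only [d, hDS_symm x y]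
  have hd_self : ∀ x, d x x = 0 := by
    intro x
    have : ¬ (DS x x).Nonempty := by rintro ⟨n, hn⟩; exact hn Iff.rfl
    simp only [d, if_neg this]
  have hd_nonneg : ∀ x y, 0 ≤ d x y := by
    intro x y
    simp only [d]
    split
    · positivity
    · exact le_rfl
  have hd_zero_iff : ∀ x y, d x y = 0 ↔ x = y := by
    intro x y
    constructor
    · intro h
      by_contra hxy
      rw [show d x y = (2⁻¹:ℝ) ^ sInf (DS x y) from if_pos (hsep x y hxy)] at h
      exact absurd h (by positivity)
    · rintro rfl; exact hd_self x
  -- if d x y < 2⁻¹ ^ n then x, y agree at n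
  have key_agree : ∀ (x y : X) (n : ℕ), d x y < (2⁻¹ : ℝ) ^ n → P x y n := by
    intro x y n h
    by_cases hne : (DS x y).Nonempty
    · rw [show d x y = (2⁻¹:ℝ) ^ sInf (DS x y) from if_pos hne] at h
      have hlt : n < sInf (DS x y) :=
        (pow_lt_pow_iff_right_of_lt_one₀ (by norm_num) (by norm_num)).mp h
      by_contra hP
      exact Nat.notMem_of_lt_sInf hlt hP
    · by_contra hP
      exact hne ⟨n, hP⟩
  -- ultrametric inequality
  have hultra : ∀ x y z : X, d x z ≤ max (d x y) (d y z) := by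
    intro x y z
    by_cases h : (DS x z).Nonempty
    · have hN := Nat.sInf_mem h
      have hdisj : ¬ P x y (sInf (DS x z)) ∨ ¬ P y z (sInf (DS x z)) := by
        by_contra hcon
        push_neg at hcon
        exact hN (hcon.1.trans hcon.2)
      rcases hdisj with h1 | h1
      · have hne : (DS x y).Nonempty := ⟨_, h1⟩
        have hle : sInf (DS x y) ≤ sInf (DS x z) := Nat.sInf_le h1
        refine le_max_of_le_left ?_
        rw [show d x z = (2⁻¹:ℝ) ^ sInf (DS x z) from if_pos h,
          show d x y = (2⁻¹:ℝ) ^ sInf (DS x y) from if_pos hne]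
        exact pow_le_pow_of_le_one (by norm_num) (by norm_num) hle
      · have hne : (DS y z).Nonempty := ⟨_, h1⟩
        have hle : sInf (DS y z) ≤ sInf (DS x z) := Nat.sInf_le h1
        refine le_max_of_le_right ?_
        rw [show d x z = (2⁻¹:ℝ) ^ sInf (DS x z) from if_pos h,
          show d y z = (2⁻¹:ℝ) ^ sInf (DS y z) from if_pos hne]
        exact pow_le_pow_of_le_one (by norm_num) (by norm_num) hle
    · rw [show d x z = 0 from if_neg h]
      exact le_max_of_le_left (hd_nonneg x y)
  -- characterization of balls
  have hball_iff : ∀ (x y : X) (ε : ℝ), 0 < ε →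
      (d x y < ε ↔ ∀ n < sInf {n : ℕ | (2⁻¹ : ℝ) ^ n < ε}, P x y n) := by
    intro x y ε hε
    have hTne : {n : ℕ | (2⁻¹ : ℝ) ^ n < ε}.Nonempty :=
      exists_pow_lt_of_lt_one hε (by norm_num)
    constructor
    · intro h n hn
      by_cases hne : (DS x y).Nonempty
      · rw [show d x y = (2⁻¹:ℝ) ^ sInf (DS x y) from if_pos hne] at h
        have h1 : sInf {n : ℕ | (2⁻¹ : ℝ) ^ n < ε} ≤ sInf (DS x y) := Nat.sInf_le h
        by_contra hP
        have := Nat.sInf_le (show n ∈ DS x y from hP)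
        omega
      · by_contra hP
        exact hne ⟨n, hP⟩
    · intro h
      by_cases hne : (DS x y).Nonempty
      · rw [show d x y = (2⁻¹:ℝ) ^ sInf (DS x y) from if_pos hne]
        have hmem := Nat.sInf_mem hne
        have hk : sInf {n : ℕ | (2⁻¹ : ℝ) ^ n < ε} ≤ sInf (DS x y) := by
          by_contra hlt
          push_neg at hlt
          exact hmem (h _ hlt)
        calc (2⁻¹:ℝ) ^ sInf (DS x y) ≤ (2⁻¹:ℝ) ^ sInf {n : ℕ | (2⁻¹ : ℝ) ^ n < ε} :=
              pow_le_pow_of_le_one (by norm_num) (by norm_num) hk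
          _ < ε := Nat.sInf_mem hTne
      · rw [show d x y = (0:ℝ) from if_neg hne]; exact hε
  -- the topology equality
  have htopeq : upperTopE a b Λ =
      generateFrom {U : Set X | ∃ (x : X) (ε : ℝ), 0 < ε ∧ U = {y | d x y < ε}} := by
    apply le_antisymm
    · apply le_generateFrom
      rintro U ⟨x, ε, hε, rfl⟩
      set k := sInf {n : ℕ | (2⁻¹ : ℝ) ^ n < ε} with hk
      have hUeq : {y | d x y < ε} = ⋂ n ∈ Finset.range k,
          (if (x : EReal) ≤ ((e n : ℝ) : EReal)
            then {y : X | (y : EReal) ≤ ((e n : ℝ) : EReal)}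
            else {y : X | ((e n : ℝ) : EReal) < (y : EReal)}) := by
        ext y
        simp only [Set.mem_setOf_eq, Set.mem_iInter, Finset.mem_range]
        rw [hball_iff x y ε hε]
        apply forall_congr'
        intro n
        apply imp_congr_right
        intro _
        by_cases hx : (x : EReal) ≤ ((e n : ℝ) : EReal)
        · rw [if_pos hx]
          exact ⟨fun hP => hP.mp hx, fun hy => iff_of_true hx hy⟩
        · rw [if_neg hx]
          exact ⟨fun hP => not_le.mp (fun hy => hx (hP.mpr hy)),
            fun hy => iff_of_false hx (not_le.mpr hy)⟩
      rw [hUeq]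
      letI := upperTopE a b Λ
      apply isOpen_biInter_finset
      intro n _
      by_cases hx : (x : EReal) ≤ ((e n : ℝ) : EReal)
      · rw [if_pos hx]; exact isOpen_le hΛmem (heΛ n)
      · rw [if_neg hx]; exact isOpen_gt hΛmem (heΛ n)
    · rw [upperTopE_eq hΛmem hΛdense]
      apply le_generateFrom
      letI := generateFrom {U : Set X | ∃ (x : X) (ε : ℝ), 0 < ε ∧ U = {y | d x y < ε}}
      rintro U (⟨l, hl, rfl⟩ | ⟨l, hl, rfl⟩)
      all_goals {
        obtain ⟨n, rfl⟩ : ∃ n, e n = l := by rw [he] at hl; exact hl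
        rw [isOpen_iff_forall_mem_open]
        intro x hx
        refine ⟨{y | d x y < (2⁻¹:ℝ) ^ n}, ?_, .basic _ ⟨x, (2⁻¹:ℝ) ^ n, by positivity, rfl⟩,
          by simp only [Set.mem_setOf_eq, hd_self x]; positivity⟩
        intro y hy
        have hP := key_agree x y n hy
        first
          | exact hP.mp hx
          | exact not_le.mp fun hy' => (not_le.mpr hx) (hP.mpr hy')
      }
  -- assemble
  refine ⟨d, ⟨hd_symm, hd_zero_iff, fun x y z => ?_, htopeq⟩, hultra⟩
  exact le_trans (hultra x y z)
    (max_le (le_add_of_nonneg_right (hd_nonneg y z)) (le_add_of_nonneg_left (hd_nonneg x y)))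

end Statement12Aux

/-- For `Λ ⊆ (a,b]` dense in the Euclidean topology, the space
`(a,b]_Λ` (with the `Λ`-upper limit topology) is second-countable iff metrizable iff
ultrametrizable iff `Λ` is countable. -/
theorem statement12 (a b : EReal) (hab : a < b) (Λ : Set ℝ)
    (hΛmem : ∀ r ∈ Λ, a < (r : EReal) ∧ (r : EReal) ≤ b)
    (hΛdense : ∀ x : EReal, a < x → x ≤ b →
      x ∈ closure ((fun r : ℝ => (r : EReal)) '' Λ)) :
    List.TFAE [Λ.Countable,
      @SecondCountableTopology {x : EReal // a < x ∧ x ≤ b} (upperTopE a b Λ),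
      IsMetrizable (upperTopE a b Λ),
      IsUltrametrizable (upperTopE a b Λ)] := by
  tfae_have 1 → 2 := fun hc => secondCountable_of_countable hΛmem hΛdense hc
  tfae_have 2 → 1 := fun h2 => countable_of_secondCountable hΛmem h2
  tfae_have 1 → 4 := fun hc => ultra_of_countable hab hΛmem hΛdense hc
  tfae_have 4 → 3 := fun ⟨d, hd, _⟩ => ⟨d, hd⟩
  tfae_have 3 → 1 := fun h => countable_of_metrizable hΛmem h
  tfae_finish

end PaperPCZar
end
end
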